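/- arXiv:1704.05673 — 11 statements merged into one kernel-verified Lean document; each statement's English description precedes it below -/
import Mathlib

section
/- Let V be a finite-dimensional vector space over a field F with dim V ≥ 2. Then the girth of the subspace inclusion graph In(V) is either 3, 6, or ∞ (the latter meaning In(V) is acyclic). -/
/-- The vertex type of the subspace inclusion graph: nontrivial proper subspaces. -/
abbrev InVert (F V : Type*) [Field F] [AddCommGroup V] [Module F V] :=
  {W : Submodule F V // W ≠ ⊥ ∧ W ≠ ⊤}

/-- The subspace inclusion graph `In(V)`: vertices are the nontrivial proper subspaces
of `V`, two of them being adjacent iff one is properly contained in the other. -/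
def inclGraph (F V : Type*) [Field F] [AddCommGroup V] [Module F V] :
    SimpleGraph (InVert F V) where
  Adj W₁ W₂ := W₁.1 < W₂.1 ∨ W₂.1 < W₁.1
  symm := ⟨fun _ _ h => h.symm⟩
  loopless := ⟨fun _ h => h.elim (lt_irrefl _) (lt_irrefl _)⟩

open Module Submodule

section Aux

variable {F V : Type*} [Field F] [AddCommGroup V] [Module F V] [FiniteDimensional F V]

lemma InVert.finrank_pos (W : InVert F V) : 0 < finrank F W.1 := by
  rcases Nat.eq_zero_or_pos (finrank F W.1) with h | h
  · exact absurd (Submodule.finrank_eq_zero.mp h) W.2.1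
  · exact h

lemma InVert.finrank_lt' (W : InVert F V) : finrank F W.1 < finrank F V :=
  Submodule.finrank_lt W.2.2

variable {ι : Type*} (b : Basis ι F V)

lemma mem_spanb {s : Set ι} {i : ι} (h : i ∈ s) : b i ∈ span F (b '' s) :=
  subset_span ⟨i, h, rfl⟩

lemma not_mem_spanb {s : Set ι} {i : ι} (h : i ∉ s) : b i ∉ span F (b '' s) :=
  b.linearIndependent.notMem_span_image h

lemma spanb_ne {s t : Set ι} {i : ι} (his : i ∈ s) (hit : i ∉ t) :
    span F (b '' s) ≠ span F (b '' t) :=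
  fun h => not_mem_spanb b hit (h ▸ mem_spanb b his)

lemma spanb_lt {s t : Set ι} (hst : s ⊆ t) {i : ι} (hit : i ∈ t) (his : i ∉ s) :
    span F (b '' s) < span F (b '' t) :=
  lt_of_le_of_ne (span_mono (Set.image_mono hst)) ((spanb_ne b hit his).symm)

lemma spanb_ne_bot {s : Set ι} {i : ι} (h : i ∈ s) : span F (b '' s) ≠ ⊥ := by
  intro hb
  have := mem_spanb b h
  rw [hb, Submodule.mem_bot] at this
  exact b.ne_zero i this

lemma spanb_ne_top {s : Set ι} {i : ι} (h : i ∉ s) : span F (b '' s) ≠ ⊤ := by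
  intro ht
  exact not_mem_spanb b h (ht ▸ Submodule.mem_top)

lemma invert_ne {s t : Set ι} {i : ι} (his : i ∈ s) (hit : i ∉ t)
    {hs : span F (b '' s) ≠ ⊥ ∧ span F (b '' s) ≠ ⊤}
    {ht : span F (b '' t) ≠ ⊥ ∧ span F (b '' t) ≠ ⊤} :
    (⟨span F (b '' s), hs⟩ : InVert F V) ≠ ⟨span F (b '' t), ht⟩ :=
  fun h => spanb_ne b his hit (congrArg Subtype.val h)

end Aux

section Dim3

variable {F V : Type*} [Field F] [AddCommGroup V] [Module F V] [FiniteDimensional F V]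

lemma rank_one_or_two (hdim : finrank F V = 3) (u : InVert F V) :
    finrank F u.1 = 1 ∨ finrank F u.1 = 2 := by
  have h1 := u.finrank_pos
  have h2 := u.finrank_lt'
  omega

lemma adj_lt_of_rank_one {u v : InVert F V}
    (h : (inclGraph F V).Adj u v) (hu : finrank F u.1 = 1) : u.1 < v.1 := by
  rcases h with h | h
  · exact h
  · have h1 := Submodule.finrank_lt_finrank_of_lt h
    have h2 := v.finrank_pos
    omega

lemma adj_gt_of_rank_two (hdim : finrank F V = 3) {u v : InVert F V}
    (h : (inclGraph F V).Adj u v) (hu : finrank F u.1 = 2) : v.1 < u.1 := by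
  rcases h with h | h
  · have h1 := Submodule.finrank_lt_finrank_of_lt h
    have h2 := v.finrank_lt'
    omega
  · exact h

lemma no_four_aux (hdim : finrank F V = 3) {x y z w : InVert F V}
    (h1 : x.1 < y.1) (h2 : z.1 < y.1) (h3 : z.1 < w.1) (h4 : x.1 < w.1)
    (hyw : y ≠ w) : x = z := by
  have hrx := x.finrank_pos
  have hrz := z.finrank_pos
  have hry : finrank F y.1 = 2 := by
    have := Submodule.finrank_lt_finrank_of_lt h1
    have := y.finrank_lt'
    omega
  have hrw : finrank F w.1 = 2 := by
    have := Submodule.finrank_lt_finrank_of_lt h4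
    have := w.finrank_lt'
    omega
  have hinf : y.1 ⊓ w.1 < y.1 := by
    rcases lt_or_eq_of_le (inf_le_left : y.1 ⊓ w.1 ≤ y.1) with h | h
    · exact h
    · exfalso
      have hle : y.1 ≤ w.1 := by rw [← h]; exact inf_le_right
      exact hyw (Subtype.ext (Submodule.eq_of_le_of_finrank_le hle (by omega)))
  have hrinf : finrank F (y.1 ⊓ w.1 : Submodule F V) < 2 := by
    have := Submodule.finrank_lt_finrank_of_lt hinf
    omega
  have hx : x.1 ≤ y.1 ⊓ w.1 := le_inf h1.le h4.le
  have hz : z.1 ≤ y.1 ⊓ w.1 := le_inf h2.le h3.le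
  have hrx1 : finrank F x.1 = 1 := by
    have := Submodule.finrank_lt_finrank_of_lt h1
    omega
  have hrz1 : finrank F z.1 = 1 := by
    have := Submodule.finrank_lt_finrank_of_lt h2
    omega
  have hx' := Submodule.eq_of_le_of_finrank_le hx
    (by have := Submodule.finrank_mono hx; omega)
  have hz' := Submodule.eq_of_le_of_finrank_le hz
    (by have := Submodule.finrank_mono hz; omega)
  exact Subtype.ext (hx'.trans hz'.symm)

/-- The parity coloring in dimension 3. -/
noncomputable def dim3Coloring (hdim : finrank F V = 3) : (inclGraph F V).Coloring Bool :=
  SimpleGraph.Coloring.mk (fun W => decide (finrank F W.1 = 1)) (by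
    intro u v h
    have hne : finrank F u.1 ≠ finrank F v.1 := by
      rcases h with h | h
      · exact (Submodule.finrank_lt_finrank_of_lt h).ne
      · exact (Submodule.finrank_lt_finrank_of_lt h).ne'
    have hu := rank_one_or_two hdim u
    have hv := rank_one_or_two hdim v
    simp only [ne_eq, decide_eq_decide]
    omega)

end Dim3

section Six

variable {F V : Type*} [Field F] [AddCommGroup V] [Module F V] [FiniteDimensional F V]

open SimpleGraph

lemma exists_six_cycle (hdim : finrank F V = 3) :
    ∃ (a : InVert F V) (w : (inclGraph F V).Walk a a), w.IsCycle ∧ w.length = 6 := by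
  classical
  let b : Basis (Fin 3) F V := finBasisOfFinrankEq F V hdim
  let L1 : InVert F V := ⟨span F (b '' {0}), spanb_ne_bot b (i := 0) rfl, spanb_ne_top b (i := 1) (by simp)⟩
  let L2 : InVert F V := ⟨span F (b '' {1}), spanb_ne_bot b (i := 1) rfl, spanb_ne_top b (i := 0) (by simp)⟩
  let L3 : InVert F V := ⟨span F (b '' {2}), spanb_ne_bot b (i := 2) rfl, spanb_ne_top b (i := 0) (by simp)⟩
  let P12 : InVert F V := ⟨span F (b '' {0, 1}), spanb_ne_bot b (i := 0) (by simp), spanb_ne_top b (i := 2) (by simp)⟩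
  let P23 : InVert F V := ⟨span F (b '' {1, 2}), spanb_ne_bot b (i := 1) (by simp), spanb_ne_top b (i := 0) (by simp)⟩
  let P31 : InVert F V := ⟨span F (b '' {0, 2}), spanb_ne_bot b (i := 0) (by simp), spanb_ne_top b (i := 1) (by simp)⟩
  have a1 : (inclGraph F V).Adj L1 P12 := Or.inl (spanb_lt b (by simp) (i := 1) (by simp) (by simp))
  have a2 : (inclGraph F V).Adj P12 L2 := Or.inr (spanb_lt b (by simp) (i := 0) (by simp) (by simp))
  have a3 : (inclGraph F V).Adj L2 P23 := Or.inl (spanb_lt b (by simp) (i := 2) (by simp) (by simp))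
  have a4 : (inclGraph F V).Adj P23 L3 := Or.inr (spanb_lt b (by simp) (i := 1) (by simp) (by simp))
  have a5 : (inclGraph F V).Adj L3 P31 := Or.inl (spanb_lt b (by simp) (i := 0) (by simp) (by simp))
  have a6 : (inclGraph F V).Adj P31 L1 := Or.inr (spanb_lt b (by simp) (i := 2) (by simp) (by simp))
  have ne12 : L1 ≠ L2 := invert_ne b (s := {0}) (t := {1}) (i := 0) rfl (by simp)
  have ne13 : L1 ≠ L3 := invert_ne b (s := {0}) (t := {2}) (i := 0) rfl (by simp)
  have ne23 : L2 ≠ L3 := invert_ne b (s := {1}) (t := {2}) (i := 1) rfl (by simp)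
  have neab : P12 ≠ P23 := invert_ne b (s := {0,1}) (t := {1,2}) (i := 0) (by simp) (by simp)
  have neac : P12 ≠ P31 := invert_ne b (s := {0,1}) (t := {0,2}) (i := 1) (by simp) (by simp)
  have nebc : P23 ≠ P31 := invert_ne b (s := {1,2}) (t := {0,2}) (i := 1) (by simp) (by simp)
  have n1a : L1 ≠ P12 := (invert_ne b (s := {0,1}) (t := {0}) (i := 1) (by simp) (by simp)).symm
  have n1b : L1 ≠ P23 := invert_ne b (s := {0}) (t := {1,2}) (i := 0) rfl (by simp)
  have n1c : L1 ≠ P31 := (invert_ne b (s := {0,2}) (t := {0}) (i := 2) (by simp) (by simp)).symm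
  have n2a : L2 ≠ P12 := (invert_ne b (s := {0,1}) (t := {1}) (i := 0) (by simp) (by simp)).symm
  have n2b : L2 ≠ P23 := (invert_ne b (s := {1,2}) (t := {1}) (i := 2) (by simp) (by simp)).symm
  have n2c : L2 ≠ P31 := invert_ne b (s := {1}) (t := {0,2}) (i := 1) rfl (by simp)
  have n3a : L3 ≠ P12 := invert_ne b (s := {2}) (t := {0,1}) (i := 2) rfl (by simp)
  have n3b : L3 ≠ P23 := (invert_ne b (s := {1,2}) (t := {2}) (i := 1) (by simp) (by simp)).symm
  have n3c : L3 ≠ P31 := (invert_ne b (s := {0,2}) (t := {2}) (i := 0) (by simp) (by simp)).symm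
  refine ⟨L1, SimpleGraph.Walk.cons a1 (SimpleGraph.Walk.cons a2 (SimpleGraph.Walk.cons a3
    (SimpleGraph.Walk.cons a4 (SimpleGraph.Walk.cons a5
    (SimpleGraph.Walk.cons a6 SimpleGraph.Walk.nil))))), ?_, rfl⟩
  clear_value L1 L2 L3 P12 P23 P31
  rw [SimpleGraph.Walk.isCycle_def, SimpleGraph.Walk.isTrail_def]
  refine ⟨?_, by simp, ?_⟩
  · simp only [SimpleGraph.Walk.edges_cons, SimpleGraph.Walk.edges_nil, List.nodup_cons,
      List.mem_cons, List.not_mem_nil, or_false, List.nodup_nil, and_true, Sym2.eq, Sym2.rel_iff',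
      Prod.mk.injEq, Prod.swap_prod_mk, not_or]
    aesop
  · simp only [SimpleGraph.Walk.support_cons, SimpleGraph.Walk.support_nil, List.tail_cons,
      List.nodup_cons, List.mem_cons, List.not_mem_nil, or_false, List.nodup_nil, and_true, not_or]
    aesop

end Six

section Low

variable {F V : Type*} [Field F] [AddCommGroup V] [Module F V] [FiniteDimensional F V]

open SimpleGraph

lemma six_le_egirth (hdim : finrank F V = 3) : 6 ≤ (inclGraph F V).egirth := by
  rw [SimpleGraph.le_egirth]
  intro a w hw
  have hge3 := hw.three_le_length
  have heven : Even w.length :=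
    ((dim3Coloring hdim).even_length_iff_congr w).mpr Iff.rfl
  have h4 : w.length ≠ 4 := by
    intro hlen
    cases w with
    | nil => simp at hlen
    | @cons _ b _ h1 w =>
    cases w with
    | nil => simp at hlen
    | @cons _ c _ h2 w =>
    cases w with
    | nil => simp at hlen
    | @cons _ d _ h3 w =>
    cases w with
    | nil => simp at hlen
    | @cons _ e _ h4 w =>
    cases w with
    | cons h5 w => simp at hlen
    | nil =>
    -- vertices a, b, c, d with adjacencies h1 : a~b, h2 : b~c, h3 : c~d, h4 : d~a
    have hnd := hw.support_nodup
    simp only [Walk.support_cons, Walk.support_nil, List.tail_cons, List.nodup_cons,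
      List.mem_cons, List.not_mem_nil, or_false, List.nodup_nil, and_true, not_or] at hnd
    obtain ⟨⟨hbc, hbd, hba⟩, ⟨hcd, hca⟩, hda, -⟩ := hnd
    rcases rank_one_or_two hdim a with ha | ha
    · have lab : a.1 < b.1 := adj_lt_of_rank_one h1 ha
      have hb2 : finrank F b.1 = 2 := by
        have := Submodule.finrank_lt_finrank_of_lt lab
        have := b.finrank_lt'
        omega
      have lcb : c.1 < b.1 := adj_gt_of_rank_two hdim h2 hb2
      have hc1 : finrank F c.1 = 1 := by
        have := Submodule.finrank_lt_finrank_of_lt lcb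
        have := c.finrank_pos
        omega
      have lcd : c.1 < d.1 := adj_lt_of_rank_one h3 hc1
      have lad : a.1 < d.1 := adj_lt_of_rank_one h4.symm ha
      exact hca (no_four_aux hdim lab lcb lcd lad hbd).symm
    · have lba : b.1 < a.1 := adj_gt_of_rank_two hdim h1 ha
      have hb1 : finrank F b.1 = 1 := by
        have := Submodule.finrank_lt_finrank_of_lt lba
        have := b.finrank_pos
        omega
      have lbc : b.1 < c.1 := adj_lt_of_rank_one h2 hb1
      have hc2 : finrank F c.1 = 2 := by
        have := Submodule.finrank_lt_finrank_of_lt lbc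
        have := c.finrank_lt'
        omega
      have ldc : d.1 < c.1 := adj_gt_of_rank_two hdim h3 hc2
      have lda : d.1 < a.1 := adj_gt_of_rank_two hdim h4.symm ha
      exact hbd (no_four_aux hdim lba lda ldc lbc (fun h => hca h.symm))
  rcases heven with ⟨k, hk⟩
  have : 6 ≤ w.length := by omega
  exact_mod_cast Nat.cast_le.mpr this

end Low

section Main

variable {F V : Type*} [Field F] [AddCommGroup V] [Module F V] [FiniteDimensional F V]

open SimpleGraph

lemma inclGraph_eq_bot (hdim : finrank F V = 2) : inclGraph F V = ⊥ := by
  ext u v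
  simp only [SimpleGraph.bot_adj, iff_false]
  rintro (h | h) <;>
  · have h1 := Submodule.finrank_lt_finrank_of_lt h
    have := u.finrank_pos
    have := v.finrank_pos
    have := u.finrank_lt'
    have := v.finrank_lt'
    omega

lemma egirth_eq_three (hdim : 4 ≤ finrank F V) : (inclGraph F V).egirth = 3 := by
  classical
  let b : Basis (Fin (finrank F V)) F V := finBasis F V
  have h0 : (0 : ℕ) < finrank F V := by omega
  have h1 : (1 : ℕ) < finrank F V := by omega
  have h2 : (2 : ℕ) < finrank F V := by omega
  have h3 : (3 : ℕ) < finrank F V := by omega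
  let i0 : Fin (finrank F V) := ⟨0, h0⟩
  let i1 : Fin (finrank F V) := ⟨1, h1⟩
  let i2 : Fin (finrank F V) := ⟨2, h2⟩
  let i3 : Fin (finrank F V) := ⟨3, h3⟩
  let s1 : Set (Fin (finrank F V)) := {i0}
  let s2 : Set (Fin (finrank F V)) := {i0, i1}
  let s3 : Set (Fin (finrank F V)) := {i0, i1, i2}
  have hne01 : i0 ≠ i1 := by simp [i0, i1, Fin.ext_iff]
  have hne02 : i0 ≠ i2 := by simp [i0, i2, Fin.ext_iff]
  have hne12 : i1 ≠ i2 := by simp [i1, i2, Fin.ext_iff]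
  have hne03 : i0 ≠ i3 := by simp [i0, i3, Fin.ext_iff]
  have hne13 : i1 ≠ i3 := by simp [i1, i3, Fin.ext_iff]
  have hne23 : i2 ≠ i3 := by simp [i2, i3, Fin.ext_iff]
  let v1 : InVert F V := ⟨span F (b '' s1), spanb_ne_bot b (i := i0) rfl,
    spanb_ne_top b (i := i1) (by simp [s1, hne01.symm])⟩
  let v2 : InVert F V := ⟨span F (b '' s2), spanb_ne_bot b (i := i0) (by simp [s2]),
    spanb_ne_top b (i := i2) (by simp [s2, hne02.symm, hne12.symm])⟩
  let v3 : InVert F V := ⟨span F (b '' s3), spanb_ne_bot b (i := i0) (by simp [s3]),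
    spanb_ne_top b (i := i3) (by simp [s3, hne03.symm, hne13.symm, hne23.symm])⟩
  have a12 : (inclGraph F V).Adj v1 v2 :=
    Or.inl (spanb_lt b (by simp [s1, s2]) (i := i1) (by simp [s2]) (by simp [s1, hne01.symm]))
  have a23 : (inclGraph F V).Adj v2 v3 :=
    Or.inl (spanb_lt b (by intro x hx; simp [s2] at hx; rcases hx with h | h <;> simp [s3, h])
      (i := i2) (by simp [s3]) (by simp [s2, hne02.symm, hne12.symm]))
  have a13 : (inclGraph F V).Adj v1 v3 :=
    Or.inl (spanb_lt b (by intro x hx; simp [s1] at hx; simp [s3, hx])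
      (i := i1) (by simp [s3]) (by simp [s1, hne01.symm]))
  have hclique : ∃ s : Finset (InVert F V), (inclGraph F V).IsNClique 3 s :=
    ⟨{v1, v2, v3}, is3Clique_triple_iff.2 ⟨a12, a13, a23⟩⟩
  obtain ⟨u, w, hw, hlen⟩ := is3Clique_iff_exists_cycle_length_three.mp hclique
  refine le_antisymm ?_ SimpleGraph.three_le_egirth
  have : (inclGraph F V).egirth ≤ (w.length : ℕ∞) :=
    iInf_le_of_le u (iInf_le_of_le w (iInf_le_of_le hw le_rfl))
  rwa [hlen] at this
  
end Main

/-- If `dim V ≥ 2`, the girth of the subspace inclusion graph `In(V)` is `3`, `6`,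
or `∞` (the latter meaning that `In(V)` is acyclic). -/
theorem inclGraph_egirth_eq_three_or_six_or_top
    (F V : Type*) [Field F] [AddCommGroup V] [Module F V] [FiniteDimensional F V]
    (h2 : 2 ≤ Module.finrank F V) :
    (inclGraph F V).egirth = 3 ∨ (inclGraph F V).egirth = 6 ∨ (inclGraph F V).egirth = ⊤ := by
  rcases (by omega : Module.finrank F V = 2 ∨ Module.finrank F V = 3 ∨ 4 ≤ Module.finrank F V)
    with h | h | h
  · right; right
    rw [inclGraph_eq_bot h]
    simp
  · right; left
    refine le_antisymm ?_ (six_le_egirth h)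
    obtain ⟨a, w, hw, hlen⟩ := exists_six_cycle h
    have hle : (inclGraph F V).egirth ≤ (w.length : ℕ∞) :=
      iInf_le_of_le a (iInf_le_of_le w (iInf_le_of_le hw le_rfl))
    rw [hlen] at hle
    exact_mod_cast hle
  · left; exact egirth_eq_three h
end

section
/- Let V be a vector space over a field F with dim V = n, 2 ≤ n < ∞. Then the clique number of the subspace inclusion graph In(V) equals n − 1. -/
/-- If `dim V = n` with `2 ≤ n < ∞`, the clique number of the subspace inclusion
graph `In(V)` equals `n - 1`. -/
theorem inclGraph_cliqueNum
    (F V : Type*) [Field F] [AddCommGroup V] [Module F V] [FiniteDimensional F V]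
    (n : ℕ) (hn : Module.finrank F V = n) (h2 : 2 ≤ n) :
    (inclGraph F V).cliqueNum = n - 1 := by
  classical
  -- upper bound for all clique sizes
  have hub : ∀ k ∈ {k | ∃ s, (inclGraph F V).IsNClique k s}, k ≤ n - 1 := by
    rintro k ⟨s, hs⟩
    have hcard : s.card = k := hs.2
    have hinj : Set.InjOn (fun W : InVert F V => Module.finrank F W.1) s := by
      intro W₁ h₁ W₂ h₂ hW
      by_contra hne
      rcases hs.1 h₁ h₂ (Subtype.coe_ne_coe.mp (fun h => hne (Subtype.ext h))) with h | h
      · exact absurd hW (Submodule.finrank_lt_finrank_of_lt h).ne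
      · exact absurd hW.symm (Submodule.finrank_lt_finrank_of_lt h).ne
    have hsub : s.image (fun W : InVert F V => Module.finrank F W.1) ⊆ Finset.Icc 1 (n - 1) := by
      intro m hm
      simp only [Finset.mem_image] at hm
      obtain ⟨W, _, rfl⟩ := hm
      have h1 : 0 < Module.finrank F W.1 := by
        rw [Nat.pos_iff_ne_zero]
        intro h
        exact W.2.1 (Submodule.finrank_eq_zero.mp h)
      have h2 : Module.finrank F W.1 < n := by
        rw [← hn]
        exact Submodule.finrank_lt W.2.2
      simp only [Finset.mem_Icc]
      omega
    calc k = s.card := hcard.symm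
      _ = (s.image (fun W : InVert F V => Module.finrank F W.1)).card :=
          (Finset.card_image_of_injOn hinj).symm
      _ ≤ (Finset.Icc 1 (n - 1)).card := Finset.card_le_card hsub
      _ = n - 1 := by rw [Nat.card_Icc]; omega
  -- construction of a clique of size n - 1
  have hmem : (n - 1) ∈ {k | ∃ s, (inclGraph F V).IsNClique k s} := by
    set b : Module.Basis (Fin n) F V := Module.finBasisOfFinrankEq F V hn with hb
    have hnbot : ∀ i : Fin (n - 1), b.flag ⟨i + 1, by omega⟩ ≠ ⊥ := by
      intro i h
      have h0 : (0 : Fin (n + 1)) < ⟨i + 1, by omega⟩ := by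
        rw [Fin.lt_def]; simp only [Fin.val_zero]; omega
      have := Module.Basis.flag_strictMono b h0
      rw [h, b.flag_zero] at this
      exact lt_irrefl _ this
    have hntop : ∀ i : Fin (n - 1), b.flag ⟨i + 1, by omega⟩ ≠ ⊤ := by
      intro i h
      have h1 : (⟨i + 1, by omega⟩ : Fin (n + 1)) < Fin.last n := by
        rw [Fin.lt_def]; simp only [Fin.val_last]; omega
      have := Module.Basis.flag_strictMono b h1
      rw [h, b.flag_last] at this
      exact lt_irrefl _ this
    set g : Fin (n - 1) → InVert F V :=
      fun i => ⟨b.flag ⟨i + 1, by omega⟩, hnbot i, hntop i⟩ with hg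
    have hginj : Function.Injective g := by
      intro i j hij
      have := congrArg Subtype.val hij
      simp only [hg] at this
      have := (Module.Basis.flag_strictMono b).injective this
      simpa [Fin.ext_iff] using this
    refine ⟨Finset.univ.image g, ?_, ?_⟩
    · intro W₁ h₁ W₂ h₂ hne
      simp only [Finset.coe_image, Set.mem_image] at h₁ h₂
      obtain ⟨i, _, rfl⟩ := h₁
      obtain ⟨j, _, rfl⟩ := h₂
      have hij : i ≠ j := fun h => hne (by rw [h])
      rcases lt_or_gt_of_ne hij with h | h
      · exact Or.inl (Module.Basis.flag_strictMono b (Fin.mk_lt_mk.mpr (by omega)))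
      · exact Or.inr (Module.Basis.flag_strictMono b (Fin.mk_lt_mk.mpr (by omega)))
    · rw [Finset.card_image_of_injective _ hginj, Finset.card_univ, Fintype.card_fin]
  -- combine
  have hne : {k | ∃ s, (inclGraph F V).IsNClique k s}.Nonempty := ⟨_, hmem⟩
  have hbdd : BddAbove {k | ∃ s, (inclGraph F V).IsNClique k s} := ⟨n - 1, hub⟩
  exact le_antisymm (csSup_le hne hub) (le_csSup hbdd hmem)
end

section
/- Let V be a vector space over a field F with dim V = n, 2 ≤ n < ∞. Then the chromatic number of the subspace inclusion graph In(V) equals n − 1. -/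
/-- If `dim V = n` with `2 ≤ n < ∞`, the chromatic number of the subspace inclusion
graph `In(V)` equals `n - 1`. -/
theorem inclGraph_chromaticNumber
    (F V : Type*) [Field F] [AddCommGroup V] [Module F V] [FiniteDimensional F V]
    (n : ℕ) (hn : Module.finrank F V = n) (h2 : 2 ≤ n) :
    (inclGraph F V).chromaticNumber = (n - 1 : ℕ) := by
  classical
  have hrank : ∀ W : InVert F V, 1 ≤ Module.finrank F W.1 ∧ Module.finrank F W.1 < n := by
    rintro ⟨W, hW⟩
    constructor
    · have : Nontrivial W := Submodule.nontrivial_iff_ne_bot.mpr hW.1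
      exact Module.finrank_pos
    · rw [← hn]
      exact Submodule.finrank_lt hW.2
  -- upper bound: color by dimension minus one
  have hcol : (inclGraph F V).Colorable (n - 1) := by
    refine ⟨SimpleGraph.Coloring.mk
      (fun W => ⟨Module.finrank F W.1 - 1, by
        obtain ⟨h1, h2'⟩ := hrank W; omega⟩) ?_⟩
    intro W₁ W₂ hadj
    obtain ⟨h11, h12⟩ := hrank W₁
    obtain ⟨h21, h22⟩ := hrank W₂
    have : Module.finrank F W₁.1 < Module.finrank F W₂.1 ∨
        Module.finrank F W₂.1 < Module.finrank F W₁.1 := by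
      rcases hadj with h | h
      · exact Or.inl (Submodule.finrank_lt_finrank_of_lt h)
      · exact Or.inr (Submodule.finrank_lt_finrank_of_lt h)
    simp only [Fin.mk.injEq, ne_eq]
    omega
  -- lower bound: a clique of size n-1 from a flag of subspaces
  have hlb : ((n - 1 : ℕ) : ℕ∞) ≤ (inclGraph F V).chromaticNumber := by
    have b : Module.Basis (Fin n) F V := (Module.finBasis F V).reindex (finCongr hn)
    have hne : Nontrivial F := inferInstance
    set vert : Fin (n - 1) → InVert F V := fun i =>
      ⟨b.flag ⟨i + 1, by omega⟩, by
        constructor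
        · intro h
          have h0 : b.flag 0 < b.flag ⟨i + 1, by omega⟩ :=
            b.flag_strictMono (by simp [Fin.lt_def])
          rw [h, b.flag_zero] at h0
          exact absurd h0 (lt_irrefl _)
        · intro h
          have h0 : b.flag ⟨i + 1, by omega⟩ < b.flag (Fin.last n) :=
            b.flag_strictMono (by simp [Fin.lt_def, Fin.last]; omega)
          rw [h, b.flag_last] at h0
          exact absurd h0 (lt_irrefl _)⟩ with hvert
    have hvinj : Function.Injective vert := by
      intro i j hij
      have := congrArg (fun w : InVert F V => w.1) hij
      simp only [hvert] at this
      have := b.flag_strictMono.injective this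
      have := congrArg Fin.val this
      simpa [Fin.ext_iff] using this
    have hclique : (inclGraph F V).IsClique
        ((Finset.univ.image vert : Finset (InVert F V)) : Set (InVert F V)) := by
      rw [Finset.coe_image, Finset.coe_univ, Set.image_univ]
      rintro _ ⟨i, rfl⟩ _ ⟨j, rfl⟩ hne'
      have hij : i ≠ j := fun h => hne' (by rw [h])
      rcases lt_or_gt_of_ne hij with h | h
      · exact Or.inl (b.flag_strictMono (Fin.mk_lt_mk.mpr (by
          have := Fin.lt_def.mp h; omega)))
      · exact Or.inr (b.flag_strictMono (Fin.mk_lt_mk.mpr (by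
          have := Fin.lt_def.mp h; omega)))
    have hcard : (Finset.univ.image vert).card = n - 1 := by
      rw [Finset.card_image_of_injective _ hvinj, Finset.card_univ, Fintype.card_fin]
    have := hclique.card_le_chromaticNumber
    rwa [hcard] at this
  exact le_antisymm hcol.chromaticNumber_le hlb
end

section
/- Let F_q be a finite field with q elements and V = F_q^n (the space of n-tuples over F_q) with n ≥ 2. For every nontrivial proper subspace W of V, the degree of W in In(V) equals the degree of W^⊥ in In(V), where W^⊥ is the orthogonal complement of W with respect to the standard bilinear form B(α,β) = ∑ᵢ αᵢβᵢ. -/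
/-- The degree of a subspace `W` as a vertex of `In(V)`: the number of nontrivial
proper subspaces comparable with (hence adjacent to) `W`. -/
noncomputable def inDegree (F : Type*) {V : Type*} [Field F] [AddCommGroup V] [Module F V]
    (W : Submodule F V) : ℕ :=
  Nat.card {U : Submodule F V // (U ≠ ⊥ ∧ U ≠ ⊤) ∧ (U < W ∨ W < U)}

/-- Orthogonal complement with respect to the standard bilinear form
`B(α,β) = ∑ i, α i * β i` on `Fin n → F`. -/
def orthComp {F : Type*} [Field F] {n : ℕ} (W : Submodule F (Fin n → F)) :
    Submodule F (Fin n → F) where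
  carrier := {v | ∀ w ∈ W, ∑ i, v i * w i = 0}
  zero_mem' := by intro w _; simp
  add_mem' := by
    intro a b ha hb w hw
    simp [add_mul, Finset.sum_add_distrib, ha w hw, hb w hw]
  smul_mem' := by
    intro c a ha w hw
    simp [smul_eq_mul, mul_assoc, ← Finset.mul_sum, ha w hw]


section Aux

variable {F : Type*} [Field F] {n : ℕ}

/-- The standard dot-product bilinear form. -/
noncomputable def dotB (F : Type*) [Field F] (n : ℕ) : LinearMap.BilinForm F (Fin n → F) :=
  LinearMap.mk₂ F (fun v w => ∑ i, v i * w i)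
    (by intro a b c; simp [add_mul, Finset.sum_add_distrib])
    (by intro c a b; simp [smul_eq_mul, mul_assoc, Finset.mul_sum])
    (by intro a b c; simp [mul_add, Finset.sum_add_distrib])
    (by intro c a b; simp [smul_eq_mul, Finset.mul_sum]; exact Finset.sum_congr rfl fun i _ => by ring)

lemma dotB_apply (v w : Fin n → F) : dotB F n v w = ∑ i, v i * w i := rfl

lemma dotB_isRefl : (dotB F n).IsRefl := by
  intro v w h
  simpa [dotB_apply, mul_comm] using h

lemma dotB_nondegenerate : (dotB F n).Nondegenerate := by
  refine (LinearMap.IsRefl.nondegenerate_iff_separatingLeft (B := dotB F n) (fun v w h => dotB_isRefl v w h)).2 ?_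
  intro v hv
  funext i
  simpa [dotB_apply, Pi.single_apply, Finset.sum_ite_eq'] using hv (Pi.single i 1)

lemma orthComp_eq (W : Submodule F (Fin n → F)) :
    orthComp W = (dotB F n).orthogonal W := by
  ext v
  constructor
  · intro h w hw
    simpa [LinearMap.BilinForm.IsOrtho, dotB_apply, mul_comm] using h w hw
  · intro h w hw
    simpa [LinearMap.BilinForm.IsOrtho, dotB_apply, mul_comm] using h w hw

lemma orthComp_orthComp (W : Submodule F (Fin n → F)) :
    orthComp (orthComp W) = W := by
  rw [orthComp_eq, orthComp_eq]
  exact LinearMap.BilinForm.orthogonal_orthogonal dotB_nondegenerate dotB_isRefl W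

lemma orthComp_injective :
    Function.Injective (orthComp (F := F) (n := n)) :=
  Function.LeftInverse.injective orthComp_orthComp

lemma orthComp_le {U W : Submodule F (Fin n → F)} (h : U ≤ W) :
    orthComp W ≤ orthComp U := by
  rw [orthComp_eq, orthComp_eq]
  exact LinearMap.BilinForm.orthogonal_le h

lemma orthComp_lt {U W : Submodule F (Fin n → F)} (h : U < W) :
    orthComp W < orthComp U :=
  lt_of_le_of_ne (orthComp_le h.le) (fun e => h.ne (orthComp_injective e.symm))

lemma orthComp_bot : orthComp (⊥ : Submodule F (Fin n → F)) = ⊤ := by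
  rw [orthComp_eq]
  exact LinearMap.BilinForm.orthogonal_bot

lemma orthComp_top : orthComp (⊤ : Submodule F (Fin n → F)) = ⊥ := by
  have := orthComp_orthComp (⊥ : Submodule F (Fin n → F))
  rwa [orthComp_bot] at this

lemma orthComp_ne_bot {W : Submodule F (Fin n → F)} (h : W ≠ ⊤) : orthComp W ≠ ⊥ := by
  intro e
  apply h
  have := congrArg orthComp e
  rwa [orthComp_orthComp, orthComp_bot] at this

lemma orthComp_ne_top {W : Submodule F (Fin n → F)} (h : W ≠ ⊥) : orthComp W ≠ ⊤ := by
  intro e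
  apply h
  have := congrArg orthComp e
  rwa [orthComp_orthComp, orthComp_top] at this

end Aux

/-- For every nontrivial proper subspace `W` of `F_q^n`, the degree of `W` in `In(V)`
equals the degree of its orthogonal complement `W^⊥`. -/
theorem inclGraph_degree_orthComp
    (F : Type*) [Field F] [Fintype F] (n : ℕ) (hn : 2 ≤ n)
    (W : Submodule F (Fin n → F)) (hW1 : W ≠ ⊥) (hW2 : W ≠ ⊤) :
    inDegree F W = inDegree F (orthComp W) := by
  apply Nat.card_congr
  refine ⟨fun U => ⟨orthComp U.1, ?_⟩, fun U => ⟨orthComp U.1, ?_⟩, ?_, ?_⟩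
  · obtain ⟨⟨h1, h2⟩, h3⟩ := U.2
    refine ⟨⟨orthComp_ne_bot h2, orthComp_ne_top h1⟩, ?_⟩
    rcases h3 with h | h
    · exact Or.inr (orthComp_lt h)
    · exact Or.inl (orthComp_lt h)
  · obtain ⟨⟨h1, h2⟩, h3⟩ := U.2
    refine ⟨⟨orthComp_ne_bot h2, orthComp_ne_top h1⟩, ?_⟩
    rcases h3 with h | h
    · right; simpa [orthComp_orthComp] using orthComp_lt h
    · left; simpa [orthComp_orthComp] using orthComp_lt h
  · intro U; ext : 1; exact orthComp_orthComp U.1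
  · intro U; ext : 1; exact orthComp_orthComp U.1
end

section
/- Let F_q be a finite field with q elements and let V be an n-dimensional vector space over F_q with n ≥ 2. If W and W' are nontrivial proper subspaces of V with 1 ≤ dim W < dim W' ≤ n/2, then the degree of W' in In(V) is strictly smaller than the degree of W in In(V). -/
noncomputable def subCount (F : Type*) [Field F] (m : ℕ) : ℕ :=
  Nat.card (Submodule F (Fin m → F))

lemma card_submodule_eq (F V : Type*) [Field F] [AddCommGroup V] [Module F V]
    [FiniteDimensional F V] :
    Nat.card (Submodule F V) = subCount F (Module.finrank F V) := by
  have e : V ≃ₗ[F] (Fin (Module.finrank F V) → F) :=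
    LinearEquiv.ofFinrankEq _ _ (by simp)
  exact Nat.card_congr (Submodule.orderIsoMapComap e).toEquiv

lemma subCount_convex (F : Type*) [Field F] [Fintype F] (m : ℕ) :
    2 * subCount F (m + 1) < subCount F m + subCount F (m + 2) := by
  classical
  haveI i0 : Finite (Submodule F (Fin m → F)) := Finite.of_injective _ SetLike.coe_injective
  haveI i1 : Finite (Submodule F ((Fin m → F) × F)) := Finite.of_injective _ SetLike.coe_injective
  haveI i2 : Finite (Submodule F (((Fin m → F) × F) × F)) :=
    Finite.of_injective _ SetLike.coe_injective
  set ι₀ : (Fin m → F) →ₗ[F] (Fin m → F) × F := LinearMap.inl F (Fin m → F) F with hι₀def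
  set ι₁ : (Fin m → F) × F →ₗ[F] ((Fin m → F) × F) × F :=
    LinearMap.inl F ((Fin m → F) × F) F with hι₁def
  set φ : (Fin m → F) × F →ₗ[F] ((Fin m → F) × F) × F :=
    LinearMap.prodMap ι₀ LinearMap.id with hφdef
  have hι₀ : Function.Injective ι₀ := LinearMap.inl_injective
  have hι₁ : Function.Injective ι₁ := LinearMap.inl_injective
  have memr : ∀ (A B : Type _) [AddCommGroup A] [AddCommGroup B] [Module F A] [Module F B]
      (y : A × B), y ∈ LinearMap.range (LinearMap.inl F A B) ↔ y.2 = 0 := by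
    intro A B _ _ _ _ y
    rw [LinearMap.range_inl, LinearMap.mem_ker, LinearMap.snd_apply]
  have hφ : Function.Injective φ := by
    intro x y h
    rw [hφdef] at h
    simp only [LinearMap.prodMap_apply, Prod.mk.injEq, LinearMap.id_apply] at h
    exact Prod.ext (hι₀ h.1) h.2
  set w : ((Fin m → F) × F) × F := ((0, 1), 1) with hw
  have hinj₁ : Function.Injective (Submodule.map ι₁ : Submodule F ((Fin m → F) × F) → _) :=
    Submodule.map_injective_of_injective hι₁
  have hinjφ : Function.Injective (Submodule.map φ : Submodule F ((Fin m → F) × F) → _) :=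
    Submodule.map_injective_of_injective hφ
  have hφnotinl : ∀ U : Submodule F ((Fin m → F) × F), ¬ U ≤ LinearMap.range ι₀ →
      ¬ U.map φ ≤ LinearMap.range ι₁ := by
    intro U hU hle
    rw [SetLike.not_le_iff_exists] at hU
    obtain ⟨x, hxU, hxr⟩ := hU
    have h2 : x.2 ≠ 0 := fun h => hxr ((memr _ _ x).2 h)
    have hmem : φ x ∈ U.map φ := Submodule.mem_map_of_mem hxU
    have := (memr _ _ (φ x)).1 (hle hmem)
    rw [hφdef] at this
    simp only [LinearMap.prodMap_apply] at this
    exact h2 this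
  have hAB : ∀ U U' : Submodule F ((Fin m → F) × F), ¬ U' ≤ LinearMap.range ι₀ →
      U.map ι₁ ≠ U'.map φ := by
    intro U U' hU' h
    exact hφnotinl U' hU' (h ▸ LinearMap.map_le_range)
  have hwspan : ∀ U : Submodule F ((Fin m → F) × F), Submodule.span F {w} ≠ U.map ι₁ := by
    intro U h
    have hm : w ∈ Submodule.span F {w} := Submodule.mem_span_singleton_self w
    rw [h] at hm
    have := (memr _ _ w).1 (LinearMap.map_le_range hm)
    simp [hw] at this
  have hwφ : ∀ U : Submodule F ((Fin m → F) × F), Submodule.span F {w} ≠ U.map φ := by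
    intro U h
    have hm : w ∈ Submodule.span F {w} := Submodule.mem_span_singleton_self w
    rw [h] at hm
    obtain ⟨x, _, hx⟩ := hm
    rw [hφdef] at hx
    simp only [LinearMap.prodMap_apply] at hx
    have h0 : (ι₀ x.1).2 = (0 : F) := (memr _ _ (ι₀ x.1)).1 (LinearMap.mem_range_self _ _)
    rw [show ι₀ x.1 = w.1 from congrArg Prod.fst hx] at h0
    simp [hw] at h0
  set g : (Submodule F ((Fin m → F) × F) ⊕ Submodule F ((Fin m → F) × F)) ⊕ Unit →
      Submodule F (Fin m → F) ⊕ Submodule F (((Fin m → F) × F) × F) :=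
    fun x => match x with
    | .inl (.inl U) => if U ≤ LinearMap.range ι₀ then .inl (U.comap ι₀) else .inr (U.map ι₁)
    | .inl (.inr U) => if U ≤ LinearMap.range ι₀ then .inr (U.map ι₁) else .inr (U.map φ)
    | .inr _ => .inr (Submodule.span F {w}) with hg
  have hginj : Function.Injective g := by
    intro x y h
    rcases x with (U | U) | u <;> rcases y with (U' | U') | u' <;>
      simp only [hg] at h <;>
      (try split_ifs at h) <;>
      (try simp only [Sum.inl.injEq, Sum.inr.injEq, reduceCtorEq] at h)
    all_goals try exact congrArg Sum.inr (Subsingleton.elim u u')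
    all_goals try exact congrArg (fun z => Sum.inl (Sum.inl z)) (hinj₁ h)
    all_goals try exact congrArg (fun z => Sum.inl (Sum.inr z)) (hinj₁ h)
    all_goals try exact congrArg (fun z => Sum.inl (Sum.inr z)) (hinjφ h)
    all_goals try exact absurd h (hAB U U' ‹¬ U' ≤ LinearMap.range ι₀›)
    all_goals try exact absurd h.symm (hAB U' U ‹¬ U ≤ LinearMap.range ι₀›)
    all_goals try exact absurd h (hwspan U')
    all_goals try exact absurd h (hwφ U')
    all_goals try exact absurd h.symm (hwspan U)
    all_goals try exact absurd h.symm (hwφ U)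
    all_goals try (exfalso; exact ‹¬ U ≤ LinearMap.range ι₀› (by rw [hinj₁ h]; exact ‹U' ≤ LinearMap.range ι₀›))
    all_goals try (exfalso; exact ‹¬ U' ≤ LinearMap.range ι₀› (by rw [← hinj₁ h]; exact ‹U ≤ LinearMap.range ι₀›))
    all_goals try {
      have e : Submodule.map ι₀ (Submodule.comap ι₀ U) =
          Submodule.map ι₀ (Submodule.comap ι₀ U') := by rw [h]
      rw [Submodule.map_comap_eq_self ‹U ≤ LinearMap.range ι₀›,
        Submodule.map_comap_eq_self ‹U' ≤ LinearMap.range ι₀›] at e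
      exact congrArg (fun z => Sum.inl (Sum.inl z)) e }
  have hle := Nat.card_le_card_of_injective g hginj
  have c0 : Nat.card (Submodule F (Fin m → F)) = subCount F m := rfl
  have c1 : Nat.card (Submodule F ((Fin m → F) × F)) = subCount F (m + 1) := by
    rw [card_submodule_eq]; congr 1; simp
  have c2 : Nat.card (Submodule F (((Fin m → F) × F) × F)) = subCount F (m + 2) := by
    rw [card_submodule_eq]; congr 1; simp
  have key : 2 * subCount F (m + 1) + 1 ≤ subCount F m + subCount F (m + 2) := by
    calc 2 * subCount F (m + 1) + 1
        = Nat.card ((Submodule F ((Fin m → F) × F) ⊕ Submodule F ((Fin m → F) × F)) ⊕ Unit) := by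
          rw [Nat.card_sum, Nat.card_sum, c1, Nat.card_unique]; ring
      _ ≤ Nat.card (Submodule F (Fin m → F) ⊕ Submodule F (((Fin m → F) × F) × F)) := hle
      _ = subCount F m + subCount F (m + 2) := by rw [Nat.card_sum, c0, c2]
  omega

lemma subCount_step (F : Type*) [Field F] [Fintype F] (a c : ℕ) (hc : a + 1 ≤ c) :
    subCount F (a + 1) + subCount F c < subCount F a + subCount F (c + 1) := by
  induction c, hc using Nat.le_induction with
  | base => have := subCount_convex F a; linarith
  | succ c hc ih =>
      have h2 := subCount_convex F c
      have e : c + 1 + 1 = c + 2 := rfl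
      rw [e]; linarith

lemma subCount_main (F : Type*) [Field F] [Fintype F] (n a b : ℕ) (hab : a < b)
    (hb : 2 * b ≤ n) :
    subCount F b + subCount F (n - b) < subCount F a + subCount F (n - a) := by
  revert hb
  induction b, hab using Nat.le_induction with
  | base =>
      intro hb
      have h := subCount_step F a (n - a - 1) (by omega)
      have e1 : n - (a + 1) = n - a - 1 := by omega
      have e2 : n - a - 1 + 1 = n - a := by omega
      rw [e1, ← e2]
      exact h
  | succ b hb' ih =>
      intro hb
      have h := subCount_step F b (n - b - 1) (by omega)
      have e1 : n - (b + 1) = n - b - 1 := by omega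
      have e2 : n - b - 1 + 1 = n - b := by omega
      rw [e2] at h
      rw [e1]
      have := ih (by omega)
      linarith

lemma inDegree_add_four (F V : Type*) [Field F] [Fintype F] [AddCommGroup V] [Module F V]
    [FiniteDimensional F V] (W : Submodule F V) (hb : W ≠ ⊥) (ht : W ≠ ⊤) :
    inDegree F W + 4 =
      subCount F (Module.finrank F W) + subCount F (Module.finrank F (V ⧸ W)) := by
  classical
  haveI : Finite V := Module.finite_of_finite F
  haveI : Finite (Submodule F V) := Finite.of_injective _ SetLike.coe_injective
  set s₁ : Set (Submodule F V) := {U | U < W ∧ U ≠ ⊥} with hs₁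
  set s₂ : Set (Submodule F V) := {U | W < U ∧ U ≠ ⊤} with hs₂
  have hle1 : ({U | U ≤ W} : Set (Submodule F V)) = insert ⊥ (insert W s₁) := by
    ext U
    simp only [Set.mem_setOf_eq, Set.mem_insert_iff, hs₁]
    constructor
    · intro h
      by_cases h0 : U = ⊥
      · exact Or.inl h0
      by_cases hw : U = W
      · exact Or.inr (Or.inl hw)
      · exact Or.inr (Or.inr ⟨lt_of_le_of_ne h hw, h0⟩)
    · rintro (rfl | rfl | ⟨h, _⟩)
      · exact bot_le
      · exact le_rfl
      · exact h.le
  have hle2 : ({U | W ≤ U} : Set (Submodule F V)) = insert ⊤ (insert W s₂) := by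
    ext U
    simp only [Set.mem_setOf_eq, Set.mem_insert_iff, hs₂]
    constructor
    · intro h
      by_cases h0 : U = ⊤
      · exact Or.inl h0
      by_cases hw : U = W
      · exact Or.inr (Or.inl hw)
      · exact Or.inr (Or.inr ⟨lt_of_le_of_ne h (Ne.symm hw), h0⟩)
    · rintro (rfl | rfl | ⟨h, _⟩)
      · exact le_top
      · exact le_rfl
      · exact h.le
  have hW1 : W ∉ s₁ := by simp [hs₁]
  have hB1 : ⊥ ∉ insert W s₁ := by
    simp only [Set.mem_insert_iff, hs₁, Set.mem_setOf_eq, not_or]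
    exact ⟨fun h => hb h.symm, fun h => h.2 rfl⟩
  have c1 : ({U | U ≤ W} : Set (Submodule F V)).ncard = s₁.ncard + 2 := by
    rw [hle1, Set.ncard_insert_of_notMem hB1, Set.ncard_insert_of_notMem hW1]
  have hW2 : W ∉ s₂ := by simp [hs₂]
  have hT2 : ⊤ ∉ insert W s₂ := by
    simp only [Set.mem_insert_iff, hs₂, Set.mem_setOf_eq, not_or]
    exact ⟨fun h => ht h.symm, fun h => h.2 rfl⟩
  have c2 : ({U | W ≤ U} : Set (Submodule F V)).ncard = s₂.ncard + 2 := by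
    rw [hle2, Set.ncard_insert_of_notMem hT2, Set.ncard_insert_of_notMem hW2]
  have h₁ : ({U | U ≤ W} : Set (Submodule F V)).ncard = subCount F (Module.finrank F W) := by
    rw [← Nat.card_coe_set_eq, ← card_submodule_eq F W]
    exact (Nat.card_congr (Submodule.MapSubtype.orderIso W).toEquiv).symm
  have h₂ : ({U | W ≤ U} : Set (Submodule F V)).ncard
      = subCount F (Module.finrank F (V ⧸ W)) := by
    rw [← Nat.card_coe_set_eq, ← card_submodule_eq F (V ⧸ W)]
    exact (Nat.card_congr (Submodule.comapMkQRelIso W).toEquiv).symm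
  have hsplit : inDegree F W = s₁.ncard + s₂.ncard := by
    have e : {U : Submodule F V | (U ≠ ⊥ ∧ U ≠ ⊤) ∧ (U < W ∨ W < U)} = s₁ ∪ s₂ := by
      ext U
      simp only [Set.mem_setOf_eq, Set.mem_union, hs₁, hs₂]
      constructor
      · rintro ⟨⟨h0, h1⟩, h | h⟩
        · exact Or.inl ⟨h, h0⟩
        · exact Or.inr ⟨h, h1⟩
      · rintro (⟨h, h0⟩ | ⟨h, h1⟩)
        · refine ⟨⟨h0, ?_⟩, Or.inl h⟩
          rintro rfl
          exact ht (top_le_iff.mp h.le)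
        · refine ⟨⟨?_, h1⟩, Or.inr h⟩
          rintro rfl
          exact not_lt_bot h
    have hdisj : Disjoint s₁ s₂ := by
      rw [Set.disjoint_left]
      intro U hU hU'
      rw [hs₁] at hU
      rw [hs₂] at hU'
      exact lt_asymm hU.1 hU'.1
    have ee : Nat.card {U : Submodule F V // (U ≠ ⊥ ∧ U ≠ ⊤) ∧ (U < W ∨ W < U)} =
        ({U : Submodule F V | (U ≠ ⊥ ∧ U ≠ ⊤) ∧ (U < W ∨ W < U)}).ncard :=
      Nat.card_coe_set_eq _
    rw [inDegree, ee, e, Set.ncard_union_eq hdisj]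
  omega

/-- If `W`, `W'` are nontrivial proper subspaces with `1 ≤ dim W < dim W' ≤ n/2`,
then the degree of `W'` in `In(V)` is strictly smaller than the degree of `W`. -/
theorem inclGraph_degree_strict_anti
    (F V : Type*) [Field F] [Fintype F] [AddCommGroup V] [Module F V] [FiniteDimensional F V]
    (n : ℕ) (hn : Module.finrank F V = n) (h2 : 2 ≤ n)
    (W W' : Submodule F V) (hW : W ≠ ⊥ ∧ W ≠ ⊤) (hW' : W' ≠ ⊥ ∧ W' ≠ ⊤)
    (h1 : 1 ≤ Module.finrank F W) (hlt : Module.finrank F W < Module.finrank F W')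
    (hhalf : (Module.finrank F W' : ℚ) ≤ (n : ℚ) / 2) :
    inDegree F W' < inDegree F W := by
  obtain ⟨hWb, hWt⟩ := hW
  obtain ⟨hW'b, hW't⟩ := hW'
  have d1 := inDegree_add_four F V W hWb hWt
  have d2 := inDegree_add_four F V W' hW'b hW't
  have hq : Module.finrank F (V ⧸ W) + Module.finrank F W = n := by
    rw [← hn]; exact Submodule.finrank_quotient_add_finrank W
  have hq' : Module.finrank F (V ⧸ W') + Module.finrank F W' = n := by
    rw [← hn]; exact Submodule.finrank_quotient_add_finrank W'
  have hk' : 2 * Module.finrank F W' ≤ n := by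
    have h2 : ((2 * Module.finrank F W' : ℕ) : ℚ) ≤ (n : ℚ) := by push_cast; linarith
    exact_mod_cast h2
  have e1 : Module.finrank F (V ⧸ W) = n - Module.finrank F W := by omega
  have e1' : Module.finrank F (V ⧸ W') = n - Module.finrank F W' := by omega
  rw [e1] at d1
  rw [e1'] at d2
  have main := subCount_main F n (Module.finrank F W) (Module.finrank F W') hlt hk'
  linarith
end

section
/- Let F_q be a finite field and let V be an n-dimensional vector space over F_q with n ≥ 3. Let σ be a graph automorphism of In(V). If σ maps some 1-dimensional subspace of V to a 1-dimensional subspace, then for every nontrivial proper subspace W of V, dim σ(W) = dim W. -/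
section Aux

open Module Submodule

variable {F V : Type*} [Field F] [AddCommGroup V] [Module F V] [FiniteDimensional F V]

set_option linter.unusedSectionVars false in
lemma inclGraph_adj {A B : InVert F V} :
    (inclGraph F V).Adj A B ↔ A.1 < B.1 ∨ B.1 < A.1 := Iff.rfl

/-- Images of comparable vertices are comparable. -/
lemma comp_image (σ : inclGraph F V ≃g inclGraph F V) {A B : InVert F V} (h : A.1 < B.1) :
    (σ A).1 < (σ B).1 ∨ (σ B).1 < (σ A).1 := by
  exact inclGraph_adj.1 (σ.map_adj_iff.2 (inclGraph_adj.2 (Or.inl h)))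

/-- If `σ L` is a line then every edge at `L` is orientation preserved. -/
lemma min_image (σ : inclGraph F V ≃g inclGraph F V) {L B : InVert F V}
    (hL : finrank F (σ L).1 = 1) (h : L.1 < B.1) : (σ L).1 < (σ B).1 := by
  rcases comp_image σ h with h' | h'
  · exact h'
  · exfalso
    have h2 := Submodule.finrank_lt_finrank_of_lt h'
    rw [hL] at h2
    have h3 : (σ B).1 = ⊥ := Submodule.finrank_eq_zero.1 (by omega)
    exact (σ B).2.1 h3

/-- Forcing at the top vertex: two edges into `C` from incomparable lower ends have the
same orientation. -/
lemma forceB (σ : inclGraph F V ≃g inclGraph F V) {A B C : InVert F V}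
    (hAC : A.1 < C.1) (hBC : B.1 < C.1)
    (h1 : ¬ A.1 ≤ B.1) (h2 : ¬ B.1 ≤ A.1) (hA : (σ A).1 < (σ C).1) :
    (σ B).1 < (σ C).1 := by
  rcases comp_image σ hBC with h' | h'
  · exact h'
  · exfalso
    have hadj : ¬ (inclGraph F V).Adj (σ A) (σ B) := by
      rw [σ.map_adj_iff, inclGraph_adj]
      rintro (hh | hh)
      exacts [h1 hh.le, h2 hh.le]
    exact hadj (inclGraph_adj.2 (Or.inl (hA.trans h')))

/-- Forcing at the bottom vertex: two edges out of `A` to incomparable upper ends have the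
same orientation. -/
lemma forceA (σ : inclGraph F V ≃g inclGraph F V) {A B C : InVert F V}
    (hAB : A.1 < B.1) (hAC : A.1 < C.1)
    (h1 : ¬ B.1 ≤ C.1) (h2 : ¬ C.1 ≤ B.1) (hB : (σ A).1 < (σ B).1) :
    (σ A).1 < (σ C).1 := by
  rcases comp_image σ hAC with h' | h'
  · exact h'
  · exfalso
    have hadj : ¬ (inclGraph F V).Adj (σ B) (σ C) := by
      rw [σ.map_adj_iff, inclGraph_adj]
      rintro (hh | hh)
      exacts [h1 hh.le, h2 hh.le]
    exact hadj (inclGraph_adj.2 (Or.inr (h'.trans hB)))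

/-- All edges at lines are orientation preserved. -/
lemma lines_up (hn : 3 ≤ finrank F V) (σ : inclGraph F V ≃g inclGraph F V)
    (L₀ : InVert F V) (h1 : finrank F L₀.1 = 1) (h2 : finrank F (σ L₀).1 = 1) :
    ∀ L B : InVert F V, finrank F L.1 = 1 → L.1 < B.1 → (σ L).1 < (σ B).1 := by
  intro L B hL hLB
  by_cases hLL : L = L₀
  · exact hLL ▸ min_image σ h2 (hLL ▸ hLB)
  have hLne : L.1 ≠ L₀.1 := fun he => hLL (Subtype.ext he)
  have hBrank : 2 ≤ finrank F B.1 := by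
    have := Submodule.finrank_lt_finrank_of_lt hLB
    omega
  have hnle1 : ¬ L₀.1 ≤ L.1 := fun hle =>
    hLne (Submodule.eq_of_le_of_finrank_le hle (by omega)).symm
  have hnle2 : ¬ L.1 ≤ L₀.1 := fun hle =>
    hLne (Submodule.eq_of_le_of_finrank_le hle (by omega))
  by_cases hle : L₀.1 ≤ B.1
  · -- L₀ < B, use forcing at B
    have hL₀B : L₀.1 < B.1 := lt_of_le_of_ne hle (fun he => by
      rw [← he] at hBrank; omega)
    exact forceB σ hL₀B hLB hnle1 hnle2 (min_image σ h2 hL₀B)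
  · -- go through M = L ⊔ L₀
    have hMrank : finrank F ↥(L.1 ⊔ L₀.1) ≤ 2 := by
      have := Submodule.finrank_sup_add_finrank_inf_eq L.1 L₀.1
      omega
    have hMbot : L.1 ⊔ L₀.1 ≠ ⊥ := fun he =>
      L.2.1 (le_bot_iff.1 (le_trans le_sup_left he.le))
    have hMtop : L.1 ⊔ L₀.1 ≠ ⊤ := fun he => by
      rw [he, finrank_top] at hMrank; omega
    set M : InVert F V := ⟨L.1 ⊔ L₀.1, hMbot, hMtop⟩ with hM
    have hMrank2 : finrank F M.1 ≤ 2 := hMrank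
    have hLM : L.1 < M.1 := lt_of_le_of_ne le_sup_left (fun he =>
      hnle1 (by rw [he]; exact le_sup_right))
    have hL₀M : L₀.1 < M.1 := lt_of_le_of_ne le_sup_right (fun he =>
      hnle2 (by rw [he]; exact le_sup_left))
    have hσLM : (σ L).1 < (σ M).1 := forceB σ hL₀M hLM hnle1 hnle2 (min_image σ h2 hL₀M)
    -- B incomparable with M
    have hnMB : ¬ M.1 ≤ B.1 := fun hh => hle (le_trans le_sup_right hh)
    have hnBM : ¬ B.1 ≤ M.1 := fun hh => by
      have hBM : B.1 = M.1 := Submodule.eq_of_le_of_finrank_le hh (hMrank2.trans hBrank)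
      exact hle (by rw [hBM]; exact le_sup_right)
    exact forceA σ hLM hLB hnMB hnBM hσLM

/-- All edges are orientation preserved. -/
lemma all_up (hn : 3 ≤ finrank F V) (σ : inclGraph F V ≃g inclGraph F V)
    (L₀ : InVert F V) (h1 : finrank F L₀.1 = 1) (h2 : finrank F (σ L₀).1 = 1) :
    ∀ A B : InVert F V, A.1 < B.1 → (σ A).1 < (σ B).1 := by
  intro A B hAB
  by_cases hA1 : finrank F A.1 = 1
  · exact lines_up hn σ L₀ h1 h2 A B hA1 hAB
  have hA2 : 2 ≤ finrank F A.1 := by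
    have := Submodule.one_le_finrank_iff.2 A.2.1
    omega
  obtain ⟨v, hvB, hvA⟩ := SetLike.exists_of_lt hAB
  have hv0 : v ≠ 0 := fun h => hvA (h ▸ A.1.zero_mem)
  have hLrank : finrank F (F ∙ v) = 1 := finrank_span_singleton hv0
  have hLbot : (F ∙ v) ≠ ⊥ := fun he => hv0 (Submodule.span_singleton_eq_bot.1 he)
  have hLtop : (F ∙ v) ≠ ⊤ := fun he => by
    rw [he, finrank_top] at hLrank; omega
  set L : InVert F V := ⟨F ∙ v, hLbot, hLtop⟩ with hLdef
  have hLB : L.1 < B.1 := lt_of_le_of_ne ((Submodule.span_singleton_le_iff_mem v B.1).2 hvB)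
    (fun he => by
      have := Submodule.finrank_lt_finrank_of_lt hAB
      rw [← he] at this
      rw [show L.1 = (F ∙ v) from rfl] at this
      omega)
  have hup : (σ L).1 < (σ B).1 := lines_up hn σ L₀ h1 h2 L B hLrank hLB
  have hn1 : ¬ L.1 ≤ A.1 := fun hh =>
    hvA ((Submodule.span_singleton_le_iff_mem v A.1).1 hh)
  have hn2 : ¬ A.1 ≤ L.1 := fun hh => by
    have := Submodule.finrank_mono hh
    rw [show L.1 = (F ∙ v) from rfl, hLrank] at this
    omega
  exact forceB σ hLB hAB hn1 hn2 hup

/-- The inverse is order preserving too. -/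
lemma symm_up (σ : inclGraph F V ≃g inclGraph F V)
    (hσ : ∀ A B : InVert F V, A.1 < B.1 → (σ A).1 < (σ B).1) :
    ∀ X Y : InVert F V, X.1 < Y.1 → (σ.symm X).1 < (σ.symm Y).1 := by
  intro X Y hXY
  have hadj : (inclGraph F V).Adj (σ.symm X) (σ.symm Y) :=
    (σ.symm.map_adj_iff).2 (inclGraph_adj.2 (Or.inl hXY))
  rcases inclGraph_adj.1 hadj with h | h
  · exact h
  · exfalso
    have := hσ _ _ h
    rw [σ.apply_symm_apply, σ.apply_symm_apply] at this
    exact lt_asymm hXY this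

/-- Any nontrivial submodule has a hyperplane. -/
lemma exists_hyper (W : Submodule F V) (hW : W ≠ ⊥) :
    ∃ W' : Submodule F V, W' < W ∧ finrank F W' + 1 = finrank F W := by
  obtain ⟨m, hm⟩ : ∃ m, finrank F W = m + 1 := by
    have := Submodule.one_le_finrank_iff.2 hW
    exact ⟨finrank F W - 1, by omega⟩
  let b : Basis (Fin (m + 1)) F W := Module.finBasisOfFinrankEq F W hm
  let c : Fin m → W := b ∘ Fin.castSucc
  have hc : LinearIndependent F c :=
    b.linearIndependent.comp _ (Fin.castSucc_injective m)
  have h'' : finrank F (Submodule.span F (Set.range c)) = m := by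
    rw [finrank_span_eq_card hc, Fintype.card_fin]
  refine ⟨(Submodule.span F (Set.range c)).map W.subtype, ?_, ?_⟩
  · refine lt_of_le_of_ne (Submodule.map_subtype_le _ _) (fun he => ?_)
    have hh : finrank F ((Submodule.span F (Set.range c)).map W.subtype) = m := by
      rw [Submodule.finrank_map_subtype_eq]; exact h''
    rw [he] at hh; omega
  · rw [Submodule.finrank_map_subtype_eq, h'', hm]

/-- An order preserving map of vertices does not decrease finrank. -/
lemma inclAux_rank_le (τ : InVert F V → InVert F V)
    (hτ : ∀ A B : InVert F V, A.1 < B.1 → (τ A).1 < (τ B).1) :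
    ∀ W : InVert F V, finrank F W.1 ≤ finrank F (τ W).1 := by
  have key : ∀ k : ℕ, ∀ W : InVert F V, finrank F W.1 ≤ k →
      finrank F W.1 ≤ finrank F (τ W).1 := by
    intro k
    induction k with
    | zero =>
      intro W hW
      omega
    | succ k ih =>
      intro W hW
      by_cases h1 : finrank F W.1 ≤ k
      · exact ih W h1
      have hWk : finrank F W.1 = k + 1 := by omega
      by_cases hk0 : k = 0
      · have := Submodule.one_le_finrank_iff.2 (τ W).2.1
        omega
      obtain ⟨W', hW'lt, hW'rank⟩ := exists_hyper W.1 W.2.1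
      have hW'k : finrank F W' = k := by omega
      have hW'bot : W' ≠ ⊥ := fun he => by
        rw [he] at hW'k
        simp [finrank_bot] at hW'k
        omega
      have hW'top : W' ≠ ⊤ := fun he => W.2.2 (top_le_iff.1 (he ▸ hW'lt.le))
      have h2 := hτ ⟨W', hW'bot, hW'top⟩ W hW'lt
      have h3 := ih ⟨W', hW'bot, hW'top⟩ (by simpa [hW'k] using le_rfl)
      have h4 := Submodule.finrank_lt_finrank_of_lt h2
      simp only at h3
      omega
  exact fun W => key _ W le_rfl

end Aux

/-- If a graph automorphism of `In(V)` maps some 1-dimensional subspace to a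
1-dimensional subspace, then it preserves the dimension of every vertex. -/
theorem inclGraph_aut_dim_preserving
    (F V : Type*) [Field F] [Fintype F] [AddCommGroup V] [Module F V] [FiniteDimensional F V]
    (hn : 3 ≤ Module.finrank F V)
    (σ : inclGraph F V ≃g inclGraph F V)
    (h : ∃ L : InVert F V, Module.finrank F L.1 = 1 ∧ Module.finrank F (σ L).1 = 1) :
    ∀ W : InVert F V, Module.finrank F (σ W).1 = Module.finrank F W.1 := by
  obtain ⟨L₀, h1, h2⟩ := h
  have hup := all_up hn σ L₀ h1 h2
  have hdown := symm_up σ hup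
  intro W
  have a1 := inclAux_rank_le (fun A => σ A) (fun A B hAB => hup A B hAB) W
  have a2 := inclAux_rank_le (fun X => σ.symm X) (fun X Y hXY => hdown X Y hXY) (σ W)
  rw [σ.symm_apply_apply] at a2
  omega
end

section
/- Let F_q be a finite field and let V be an n-dimensional vector space over F_q with n ≥ 3. Let σ be a graph automorphism of In(V) which maps some 1-dimensional subspace of V to a 1-dimensional subspace. Let W be a k-dimensional nontrivial proper subspace of V with basis α₁, …, α_k, and suppose σ([αᵢ]) = [βᵢ] for 1 ≤ i ≤ k, where [γ] denotes the 1-dimensional subspace spanned by γ. If β₁, …, β_k are linearly independent, then σ(W) is the subspace spanned by β₁, …, β_k. -/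
namespace InclAux

open Module Submodule

variable {F V : Type*} [Field F] [AddCommGroup V] [Module F V] [FiniteDimensional F V]

lemma adj_def {X Y : InVert F V} : (inclGraph F V).Adj X Y ↔ X.1 < Y.1 ∨ Y.1 < X.1 :=
  Iff.rfl

lemma vert_pos (X : InVert F V) : 0 < finrank F X.1 := by
  obtain ⟨x, hx, hx0⟩ := Submodule.exists_mem_ne_zero_of_ne_bot X.2.1
  rw [Module.finrank_pos_iff_exists_ne_zero]
  exact ⟨⟨x, hx⟩, by simpa using hx0⟩

lemma vert_lt (X : InVert F V) : finrank F X.1 < finrank F V :=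
  Submodule.finrank_lt X.2.2

/-- A line is (strictly) below any vertex adjacent to it. -/
lemma line_lt_of_adj {L X : InVert F V} (hL : finrank F L.1 = 1)
    (h : (inclGraph F V).Adj L X) : L.1 < X.1 := by
  rcases h with h | h
  · exact h
  · have h1 := Submodule.finrank_lt_finrank_of_lt h
    have h2 := vert_pos X
    omega

lemma not_adj_of_finrank_eq {X Y : InVert F V}
    (h : finrank F X.1 = finrank F Y.1) : ¬ (inclGraph F V).Adj X Y := by
  rintro (hlt | hlt) <;> have := Submodule.finrank_lt_finrank_of_lt hlt <;> omega

lemma finrank_sup_span_le (p : Submodule F V) (v : V) :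
    finrank F ↥(p ⊔ Submodule.span F {v}) ≤ finrank F p + 1 := by
  refine (Submodule.finrank_add_le_finrank_add_finrank _ _).trans ?_
  rcases eq_or_ne v 0 with rfl | hv
  · rw [Submodule.span_zero_singleton, finrank_bot]
    omega
  · rw [finrank_span_singleton hv]

lemma exists_ge_finrank (d : ℕ) (p : Submodule F V) (h : finrank F p + d ≤ finrank F V) :
    ∃ q : Submodule F V, p ≤ q ∧ finrank F q = finrank F p + d := by
  induction d generalizing p with
  | zero => exact ⟨p, le_rfl, by simp⟩
  | succ d ih =>
    have hp : p ≠ ⊤ := by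
      intro hp
      rw [hp, finrank_top] at h
      omega
    obtain ⟨v, -, hv⟩ := SetLike.exists_of_lt (show p < ⊤ from lt_top_iff_ne_top.2 hp)
    have hvp : v ∈ p ⊔ Submodule.span F {v} :=
      Submodule.mem_sup_right (Submodule.mem_span_singleton_self v)
    have hlt : p < p ⊔ Submodule.span F {v} :=
      lt_of_le_of_ne le_sup_left (fun e => hv (e ▸ hvp))
    have h1 : finrank F ↥(p ⊔ Submodule.span F {v}) = finrank F p + 1 :=
      le_antisymm (finrank_sup_span_le p v) (Submodule.finrank_lt_finrank_of_lt hlt)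
    obtain ⟨q, hq, hq'⟩ := ih (p ⊔ Submodule.span F {v}) (by omega)
    exact ⟨q, le_sup_left.trans hq, by rw [hq', h1]; omega⟩

lemma exists_le_finrank (p : Submodule F V) (d : ℕ) (h : d ≤ finrank F p) :
    ∃ q : Submodule F V, q ≤ p ∧ finrank F q = d := by
  classical
  let b := Module.finBasis F ↥p
  let f : Fin d → V := fun i => (b (Fin.castLE h i) : V)
  have hli : LinearIndependent F f := by
    have h1 : LinearIndependent F fun i : Fin d => b (Fin.castLE h i) :=
      b.linearIndependent.comp _ (Fin.castLE_injective h)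
    exact h1.map' p.subtype (Submodule.ker_subtype p)
  refine ⟨Submodule.span F (Set.range f), ?_, ?_⟩
  · rw [Submodule.span_le]
    rintro x ⟨i, rfl⟩
    exact (b (Fin.castLE h i)).2
  · rw [finrank_span_eq_card hli, Fintype.card_fin]

/-- The key first-order graph property: any two adjacent neighbours of `X` admit a
common "non-neighbour" among the neighbours of `X`. -/
def Pp (X : InVert F V) : Prop :=
  ∀ a b : InVert F V, (inclGraph F V).Adj X a → (inclGraph F V).Adj X b →
    (inclGraph F V).Adj a b →
    ∃ c, (inclGraph F V).Adj X c ∧ ¬ (inclGraph F V).Adj a c ∧ ¬ (inclGraph F V).Adj c b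

lemma pp_line_core (hn : 3 ≤ finrank F V) {ℓ a b : InVert F V}
    (hl : finrank F ℓ.1 = 1) (hb : ℓ.1 < b.1) (hab : a.1 < b.1) (hla : ℓ.1 < a.1) :
    ∃ c, (inclGraph F V).Adj ℓ c ∧ ¬ (inclGraph F V).Adj a c ∧ ¬ (inclGraph F V).Adj c b := by
  obtain ⟨v, -, hv⟩ := SetLike.exists_of_lt (show b.1 < ⊤ from lt_top_iff_ne_top.2 b.2.2)
  have hfa := Submodule.finrank_lt_finrank_of_lt hla
  have hfb := Submodule.finrank_lt_finrank_of_lt hab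
  have hvZ : v ∈ ℓ.1 ⊔ Submodule.span F {v} :=
    Submodule.mem_sup_right (Submodule.mem_span_singleton_self v)
  have hZle : finrank F ↥(ℓ.1 ⊔ Submodule.span F {v}) ≤ 2 := by
    have := finrank_sup_span_le ℓ.1 v
    omega
  have hZbot : ℓ.1 ⊔ Submodule.span F {v} ≠ ⊥ := by
    intro e
    exact ℓ.2.1 (le_bot_iff.1 (le_of_le_of_eq le_sup_left e))
  have hZtop : ℓ.1 ⊔ Submodule.span F {v} ≠ ⊤ := by
    intro e
    rw [e, finrank_top] at hZle
    omega
  obtain ⟨c, hceq⟩ : ∃ c : InVert F V, c.1 = ℓ.1 ⊔ Submodule.span F {v} :=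
    ⟨⟨_, hZbot, hZtop⟩, rfl⟩
  have hvc : v ∈ c.1 := by rw [hceq]; exact hvZ
  have hcle : finrank F c.1 ≤ 2 := by rw [hceq]; exact hZle
  have hlc : ℓ.1 < c.1 := by
    rw [hceq]
    refine lt_of_le_of_ne le_sup_left (fun e => hv (hb.le ?_))
    rw [e]
    exact hvZ
  refine ⟨c, Or.inl hlc, ?_, ?_⟩
  · rintro (hc | hc)
    · have := Submodule.finrank_lt_finrank_of_lt hc
      omega
    · exact hv (hab.le (hc.le hvc))
  · rintro (hc | hc)
    · exact hv (hc.le hvc)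
    · have := Submodule.finrank_lt_finrank_of_lt hc
      omega

lemma pp_line (hn : 3 ≤ finrank F V) (ℓ : InVert F V) (hl : finrank F ℓ.1 = 1) :
    Pp ℓ := by
  intro a b ha hb hab
  have ha' := line_lt_of_adj hl ha
  have hb' := line_lt_of_adj hl hb
  rcases hab with hab | hab
  · exact pp_line_core hn hl hb' hab ha'
  · obtain ⟨c, h1, h2, h3⟩ := pp_line_core hn hl ha' hab hb'
    exact ⟨c, h1, fun h => h3 h.symm, fun h => h2 h.symm⟩

lemma pp_hyp_core (hn : 3 ≤ finrank F V) {H a b : InVert F V}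
    (hH : finrank F H.1 + 1 = finrank F V) (hb : b.1 < H.1) (hab : a.1 < b.1) :
    ∃ c, (inclGraph F V).Adj H c ∧ ¬ (inclGraph F V).Adj a c ∧ ¬ (inclGraph F V).Adj c b := by
  obtain ⟨w, hwH, hwb⟩ := SetLike.exists_of_lt hb
  have hw0 : w ≠ 0 := fun e => hwb (e ▸ b.1.zero_mem)
  have hfa := vert_pos a
  have hfab := Submodule.finrank_lt_finrank_of_lt hab
  set m : Submodule F V := Submodule.span F {w} with hm
  have hmfr : finrank F ↥m = 1 := finrank_span_singleton hw0
  have hmH : m < H.1 := by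
    refine lt_of_le_of_ne ((Submodule.span_singleton_le_iff_mem w H.1).2 hwH) (fun e => ?_)
    rw [← e, hmfr] at hH
    omega
  have hmbot : m ≠ ⊥ := by
    intro e
    rw [e, finrank_bot] at hmfr
    omega
  have hmtop : m ≠ ⊤ := by
    intro e
    rw [e, finrank_top] at hmfr
    omega
  have hwm : w ∈ m := Submodule.mem_span_singleton_self w
  set c : InVert F V := ⟨m, hmbot, hmtop⟩ with hcdef
  have hcfr : finrank F c.1 = 1 := hmfr
  refine ⟨c, Or.inr hmH, ?_, ?_⟩
  · rintro (hc | hc)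
    · have := Submodule.finrank_lt_finrank_of_lt hc
      omega
    · exact hwb (hab.le (hc.le hwm))
  · rintro (hc | hc)
    · exact hwb (hc.le hwm)
    · have := Submodule.finrank_lt_finrank_of_lt hc
      omega

lemma lt_hyp_of_adj {H X : InVert F V} (hH : finrank F H.1 + 1 = finrank F V)
    (h : (inclGraph F V).Adj H X) : X.1 < H.1 := by
  rcases h with h | h
  · have := Submodule.finrank_lt_finrank_of_lt h
    have := vert_lt X
    omega
  · exact h

lemma pp_hyp (hn : 3 ≤ finrank F V) (H : InVert F V)
    (hH : finrank F H.1 + 1 = finrank F V) : Pp H := by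
  intro a b ha hb hab
  have ha' := lt_hyp_of_adj hH ha
  have hb' := lt_hyp_of_adj hH hb
  rcases hab with hab | hab
  · exact pp_hyp_core hn hH hb' hab
  · obtain ⟨c, h1, h2, h3⟩ := pp_hyp_core hn hH ha' hab
    exact ⟨c, h1, fun h => h3 h.symm, fun h => h2 h.symm⟩

lemma not_pp_middle {X : InVert F V} (h2 : 2 ≤ finrank F X.1)
    (h3 : finrank F X.1 + 2 ≤ finrank F V) : ¬ Pp X := by
  intro hP
  obtain ⟨x, hx, hx0⟩ := Submodule.exists_mem_ne_zero_of_ne_bot X.2.1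
  obtain ⟨v, -, hv⟩ := SetLike.exists_of_lt (show X.1 < ⊤ from lt_top_iff_ne_top.2 X.2.2)
  -- the small neighbour
  have hafr : finrank F ↥(Submodule.span F {x}) = 1 := finrank_span_singleton hx0
  have habot : Submodule.span F {x} ≠ ⊥ := by
    intro e; rw [e, finrank_bot] at hafr; omega
  have hatop : Submodule.span F {x} ≠ ⊤ := by
    intro e; rw [e, finrank_top] at hafr; omega
  obtain ⟨a, haeq⟩ : ∃ a : InVert F V, a.1 = Submodule.span F {x} :=
    ⟨⟨_, habot, hatop⟩, rfl⟩
  have hafr' : finrank F a.1 = 1 := by rw [haeq]; exact hafr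
  have haX : a.1 < X.1 := by
    refine lt_of_le_of_ne ?_ (fun e => ?_)
    · rw [haeq]
      exact (Submodule.span_singleton_le_iff_mem x X.1).2 hx
    · rw [e] at hafr'
      omega
  -- the big neighbour
  have hvb : v ∈ X.1 ⊔ Submodule.span F {v} :=
    Submodule.mem_sup_right (Submodule.mem_span_singleton_self v)
  have hbfr : finrank F ↥(X.1 ⊔ Submodule.span F {v}) ≤ finrank F X.1 + 1 :=
    finrank_sup_span_le X.1 v
  have hbbot : X.1 ⊔ Submodule.span F {v} ≠ ⊥ := by
    intro e
    exact X.2.1 (le_bot_iff.1 (le_of_le_of_eq le_sup_left e))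
  have hbtop : X.1 ⊔ Submodule.span F {v} ≠ ⊤ := by
    intro e
    rw [e, finrank_top] at hbfr
    omega
  obtain ⟨b, hbeq⟩ : ∃ b : InVert F V, b.1 = X.1 ⊔ Submodule.span F {v} :=
    ⟨⟨_, hbbot, hbtop⟩, rfl⟩
  have hXb : X.1 < b.1 := by
    rw [hbeq]
    refine lt_of_le_of_ne le_sup_left (fun e => hv ?_)
    rw [e]
    exact hvb
  obtain ⟨c, hXc, hac, hcb⟩ := hP a b (Or.inr haX) (Or.inl hXb)
    (Or.inl (lt_trans haX hXb))
  rcases hXc with hc | hc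
  · exact hac (Or.inl (lt_trans haX hc))
  · exact hcb (Or.inl (lt_trans hc hXb))

lemma pp_map (σ : inclGraph F V ≃g inclGraph F V) (X : InVert F V) (h : Pp X) :
    Pp (σ X) := by
  intro a b ha hb hab
  have ha' : (inclGraph F V).Adj X (σ.symm a) := by
    have := σ.symm.map_adj_iff.2 ha
    rwa [σ.symm_apply_apply] at this
  have hb' : (inclGraph F V).Adj X (σ.symm b) := by
    have := σ.symm.map_adj_iff.2 hb
    rwa [σ.symm_apply_apply] at this
  have hab' : (inclGraph F V).Adj (σ.symm a) (σ.symm b) := σ.symm.map_adj_iff.2 hab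
  obtain ⟨c, h1, h2, h3⟩ := h (σ.symm a) (σ.symm b) ha' hb' hab'
  refine ⟨σ c, σ.map_adj_iff.2 h1, ?_, ?_⟩
  · intro hx
    apply h2
    have := σ.symm.map_adj_iff.2 hx
    rwa [σ.symm_apply_apply] at this
  · intro hx
    apply h3
    have := σ.symm.map_adj_iff.2 hx
    rwa [σ.symm_apply_apply] at this

lemma pp_dichotomy (hn : 3 ≤ finrank F V) (X : InVert F V) (h : Pp X) :
    finrank F X.1 = 1 ∨ finrank F X.1 + 1 = finrank F V := by
  have h1 := vert_pos X
  have h2 := vert_lt X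
  by_contra hc
  push_neg at hc
  exact not_pp_middle (by omega) (by omega) h

/-- An automorphism mapping one line to a line maps every line to a line. -/
lemma line_to_line (hn : 3 ≤ finrank F V) (σ : inclGraph F V ≃g inclGraph F V)
    (h : ∃ L : InVert F V, finrank F L.1 = 1 ∧ finrank F (σ L).1 = 1)
    (ℓ : InVert F V) (hl : finrank F ℓ.1 = 1) : finrank F (σ ℓ).1 = 1 := by
  obtain ⟨L, hL1, hL2⟩ := h
  by_cases hLl : ℓ = L
  · subst hLl; exact hL2
  -- a hyperplane containing both `L` and `ℓ`
  have hsup : finrank F ↥(L.1 ⊔ ℓ.1) ≤ 2 := by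
    have := Submodule.finrank_add_le_finrank_add_finrank L.1 ℓ.1
    omega
  obtain ⟨q, hq, hq'⟩ := exists_ge_finrank
    (finrank F V - 1 - finrank F ↥(L.1 ⊔ ℓ.1)) (L.1 ⊔ ℓ.1) (by omega)
  have hqfr : finrank F q + 1 = finrank F V := by omega
  have hqbot : q ≠ ⊥ := by intro e; rw [e, finrank_bot] at hqfr; omega
  have hqtop : q ≠ ⊤ := by intro e; rw [e, finrank_top] at hqfr; omega
  set H : InVert F V := ⟨q, hqbot, hqtop⟩ with hHdef
  have hLH : (inclGraph F V).Adj L H := by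
    refine Or.inl (lt_of_le_of_ne (le_sup_left.trans hq) (fun e => ?_))
    have e' : L.1 = q := e
    rw [e'] at hL1
    omega
  have hlH : (inclGraph F V).Adj ℓ H := by
    refine Or.inl (lt_of_le_of_ne (le_sup_right.trans hq) (fun e => ?_))
    have e' : ℓ.1 = q := e
    rw [e'] at hl
    omega
  have hHfr : finrank F H.1 + 1 = finrank F V := hqfr
  have hPH : Pp (σ H) := pp_map σ H (pp_hyp hn H hHfr)
  have hσH : finrank F (σ H).1 + 1 = finrank F V := by
    rcases pp_dichotomy hn (σ H) hPH with h1 | h1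
    · exact absurd (σ.map_adj_iff.2 hLH)
        (not_adj_of_finrank_eq (by rw [hL2, h1]))
    · exact h1
  have hPl : Pp (σ ℓ) := pp_map σ ℓ (pp_line hn ℓ hl)
  rcases pp_dichotomy hn (σ ℓ) hPl with h1 | h1
  · exact h1
  · exact absurd (σ.map_adj_iff.2 hlH) (not_adj_of_finrank_eq (by omega))

/-- A line-preserving automorphism is order-preserving. -/
lemma map_lt (hn : 3 ≤ finrank F V) (σ : inclGraph F V ≃g inclGraph F V)
    (hline : ∀ ℓ : InVert F V, finrank F ℓ.1 = 1 → finrank F (σ ℓ).1 = 1)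
    {X Y : InVert F V} (hXY : X.1 < Y.1) : (σ X).1 < (σ Y).1 := by
  have hadj : (inclGraph F V).Adj X Y := Or.inl hXY
  by_cases h1 : finrank F X.1 = 1
  · exact line_lt_of_adj (hline X h1) (σ.map_adj_iff.2 hadj)
  · have hpos := vert_pos X
    have h2 : 2 ≤ finrank F X.1 := by omega
    have hfXY := Submodule.finrank_lt_finrank_of_lt hXY
    obtain ⟨w, hwY, hwX⟩ := SetLike.exists_of_lt hXY
    have hw0 : w ≠ 0 := fun e => hwX (e ▸ X.1.zero_mem)
    set m : Submodule F V := Submodule.span F {w} with hm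
    have hmfr : finrank F ↥m = 1 := finrank_span_singleton hw0
    have hmbot : m ≠ ⊥ := by intro e; rw [e, finrank_bot] at hmfr; omega
    have hmtop : m ≠ ⊤ := by
      intro e; rw [e, finrank_top] at hmfr; omega
    set ℓ : InVert F V := ⟨m, hmbot, hmtop⟩ with hldef
    have hlfr : finrank F ℓ.1 = 1 := hmfr
    have hwm : w ∈ m := Submodule.mem_span_singleton_self w
    have hlY : ℓ.1 < Y.1 := by
      refine lt_of_le_of_ne ((Submodule.span_singleton_le_iff_mem w Y.1).2 hwY) (fun e => ?_)
      have e' : finrank F Y.1 = 1 := by rw [← e]; exact hlfr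
      omega
    have hlX : ¬ (inclGraph F V).Adj ℓ X := by
      rintro (hc | hc)
      · exact hwX (hc.le hwm)
      · have := Submodule.finrank_lt_finrank_of_lt hc
        omega
    have hσl : (σ ℓ).1 < (σ Y).1 :=
      line_lt_of_adj (hline ℓ hlfr) (σ.map_adj_iff.2 (Or.inl hlY))
    rcases σ.map_adj_iff.2 hadj with h | h
    · exact h
    · exact absurd (σ.map_adj_iff.1 (Or.inl (lt_trans hσl h))) hlX

lemma finrank_le_map (hn : 3 ≤ finrank F V) (σ : inclGraph F V ≃g inclGraph F V)
    (hline : ∀ ℓ : InVert F V, finrank F ℓ.1 = 1 → finrank F (σ ℓ).1 = 1) :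
    ∀ (d : ℕ) (X : InVert F V), finrank F X.1 = d → d ≤ finrank F (σ X).1 := by
  intro d
  induction d with
  | zero => exact fun X _ => Nat.zero_le _
  | succ d ih =>
    intro X hX
    rcases Nat.eq_zero_or_pos d with rfl | hd
    · rw [hline X hX]
    · obtain ⟨q, hq, hq'⟩ := exists_le_finrank X.1 d (by omega)
      have hqbot : q ≠ ⊥ := by intro e; rw [e, finrank_bot] at hq'; omega
      have hqtop : q ≠ ⊤ := fun e => X.2.2 (top_le_iff.1 (e ▸ hq))
      set X' : InVert F V := ⟨q, hqbot, hqtop⟩ with hX'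
      have hlt : X'.1 < X.1 := lt_of_le_of_ne hq (fun e => by
        have e' : q = X.1 := e
        rw [e'] at hq'
        omega)
      have h1 := ih X' hq'
      have h2 := Submodule.finrank_lt_finrank_of_lt (map_lt hn σ hline hlt)
      omega

end InclAux

open Module Submodule InclAux in
/-- Let `σ` be a graph automorphism of `In(V)` mapping some 1-dimensional subspace to a
1-dimensional subspace, `W` a vertex with basis `α₁, …, α_k`, and suppose
`σ([αᵢ]) = [βᵢ]`. If `β₁, …, β_k` are linearly independent, then
`σ(W) = [β₁, …, β_k]`. -/
theorem inclGraph_aut_span_image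
    (F V : Type*) [Field F] [Fintype F] [AddCommGroup V] [Module F V] [FiniteDimensional F V]
    (hn : 3 ≤ Module.finrank F V)
    (σ : inclGraph F V ≃g inclGraph F V)
    (h : ∃ L : InVert F V, Module.finrank F L.1 = 1 ∧ Module.finrank F (σ L).1 = 1)
    (k : ℕ) (W : InVert F V) (hk : Module.finrank F W.1 = k)
    (α β : Fin k → V)
    (hα : LinearIndependent F α) (hspan : Submodule.span F (Set.range α) = W.1)
    (Lα : Fin k → InVert F V) (hLα : ∀ i, (Lα i).1 = Submodule.span F {α i})
    (hσLα : ∀ i, (σ (Lα i)).1 = Submodule.span F {β i})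
    (hβ : LinearIndependent F β) :
    (σ W).1 = Submodule.span F (Set.range β) := by
  have hline := line_to_line hn σ h
  obtain ⟨L, hL1, hL2⟩ := h
  have h' : ∃ L' : InVert F V, finrank F L'.1 = 1 ∧ finrank F (σ.symm L').1 = 1 :=
    ⟨σ L, hL2, by rw [σ.symm_apply_apply]; exact hL1⟩
  have hline' := line_to_line hn σ.symm h'
  -- the dimension of `σ W` is `k`
  have hk1 : k ≤ finrank F (σ W).1 := finrank_le_map hn σ hline k W hk
  have hk2 : finrank F (σ W).1 ≤ k := by
    have := finrank_le_map hn σ.symm hline' (finrank F (σ W).1) (σ W) rfl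
    rwa [σ.symm_apply_apply, hk] at this
  -- the span of the `β`'s is contained in `σ W`
  have hβle : ∀ i, Submodule.span F {β i} ≤ (σ W).1 := by
    intro i
    rw [← hσLα i]
    have hle : (Lα i).1 ≤ W.1 := by
      rw [hLα i, Submodule.span_singleton_le_iff_mem, ← hspan]
      exact Submodule.subset_span (Set.mem_range_self i)
    rcases eq_or_lt_of_le hle with heq | hlt
    · rw [Subtype.ext heq]
    · exact (map_lt hn σ hline hlt).le
  have hle : Submodule.span F (Set.range β) ≤ (σ W).1 := by
    rw [Submodule.span_le]
    rintro x ⟨i, rfl⟩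
    exact hβle i (Submodule.mem_span_singleton_self (β i))
  have hfr : finrank F ↥(Submodule.span F (Set.range β)) = k := by
    rw [finrank_span_eq_card hβ, Fintype.card_fin]
  exact (Submodule.eq_of_le_of_finrank_le hle (by omega)).symm
end

section
/- Let F_q be a finite field, V = F_q^n with n ≥ 3, and let e₁, …, eₙ be the standard basis of V. Let σ be a graph automorphism of In(V), let 1 ≤ k ≤ n, suppose σ maps [e₁] to a 1-dimensional subspace, and suppose σ fixes [eᵢ] for every i with 1 ≤ i ≤ k − 1. Then there exists an invertible n×n matrix A over F_q such that the composition θ_A ∘ σ fixes [e_j] for every j with 1 ≤ j ≤ k, where θ_A is the automorphism of In(V) sending each subspace W to its image {Aw : w ∈ W} under the linear map determined by A. -/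
open Module Submodule Matrix


section InclAux
variable {F : Type*} [Field F] {n : ℕ}

abbrev eb (F : Type*) [Field F] {n : ℕ} (i : Fin n) : Fin n → F := Pi.single i 1

lemma eb_ne_zero (i : Fin n) : eb F i ≠ 0 := by
  intro h
  have := congrFun h i
  simp [eb] at this

lemma eq_of_mem_span_eb {i j : Fin n} (h : eb F i ∈ Submodule.span F {eb F j}) : i = j := by
  rcases Submodule.mem_span_singleton.1 h with ⟨c, hc⟩
  by_contra hne
  have h2 := congrFun hc i
  simp only [eb, Pi.smul_apply, Pi.single_eq_of_ne hne, smul_zero, Pi.single_eq_same] at h2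
  exact one_ne_zero h2.symm

lemma finrank_span_eb (i : Fin n) : finrank F (Submodule.span F {eb F i}) = 1 :=
  finrank_span_singleton (eb_ne_zero i)

def lvert (hn : 3 ≤ n) (i : Fin n) : InVert F (Fin n → F) :=
  ⟨Submodule.span F {eb F i},
   by simp [Submodule.span_singleton_eq_bot, eb_ne_zero],
   by
    intro h
    have h1 : finrank F (Submodule.span F {eb F i}) = 1 := finrank_span_eb i
    rw [h, finrank_top, Module.finrank_fin_fun] at h1
    omega⟩

lemma atom_lt {u U : InVert F (Fin n → F)} (h : finrank F u.1 = 1)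
    (hadj : (inclGraph F (Fin n → F)).Adj u U) : u.1 < U.1 := by
  rcases hadj with h' | h'
  · exact h'
  · exfalso
    have h2 := Submodule.finrank_lt_finrank_of_lt h'
    rw [h] at h2
    have h3 : finrank F U.1 = 0 := by omega
    exact U.2.1 (Submodule.finrank_eq_zero.1 h3)

/-- the coordinate subspace of vectors supported on coordinates `< m`. -/
def coordSub (F : Type*) [Field F] (n m : ℕ) : Submodule F (Fin n → F) where
  carrier := {x | ∀ i : Fin n, m ≤ (i : ℕ) → x i = 0}
  add_mem' := by intro a b ha hb i hi; simp [ha i hi, hb i hi]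
  zero_mem' := by intro i hi; rfl
  smul_mem' := by intro c a ha i hi; simp [ha i hi]

lemma mem_coordSub {m : ℕ} {x : Fin n → F} :
    x ∈ coordSub F n m ↔ ∀ i : Fin n, m ≤ (i : ℕ) → x i = 0 := Iff.rfl

lemma eb_mem_coordSub {m : ℕ} {i : Fin n} (h : (i : ℕ) < m) : eb F i ∈ coordSub F n m := by
  intro j hj
  exact Pi.single_eq_of_ne (fun hji => by omega) 1

lemma smul_eb (x : Fin n → F) (i : Fin n) : x i • eb F i = Pi.single i (x i) := by
  ext j
  by_cases h : j = i
  · subst h; simp [eb]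
  · simp [eb, h, Pi.single_eq_of_ne h]

lemma eq_sum_smul_eb (x : Fin n → F) : x = ∑ i : Fin n, x i • eb F i := by
  simp only [smul_eb]
  exact (Finset.univ_sum_single x).symm

lemma coordSub_le_span (m : ℕ) :
    coordSub F n m ≤ Submodule.span F (eb F '' {i : Fin n | (i : ℕ) < m}) := by
  intro x hx
  rw [eq_sum_smul_eb x]
  refine Submodule.sum_mem _ fun i _ => ?_
  by_cases hi : (i : ℕ) < m
  · exact Submodule.smul_mem _ _ (Submodule.subset_span ⟨i, hi, rfl⟩)
  · rw [hx i (by omega), zero_smul]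
    exact Submodule.zero_mem _

end InclAux

set_option maxHeartbeats 4000000

/-- If a graph automorphism `σ` of `In(F_q^n)` maps `[e₁]` to a 1-dimensional subspace
and fixes `[e₁], …, [e_{k-1}]`, then there is an invertible matrix `A` such that
`θ_A ∘ σ` fixes `[e₁], …, [e_k]`, where `θ_A` maps each subspace to its image under
the linear map determined by `A`. -/
theorem inclGraph_aut_exists_matrix_fixing
    (F : Type*) [Field F] [Fintype F] (n : ℕ) (hn : 3 ≤ n) (k : ℕ) (hk1 : 1 ≤ k) (hk2 : k ≤ n)
    (σ : inclGraph F (Fin n → F) ≃g inclGraph F (Fin n → F))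
    (h1 : ∀ w : InVert F (Fin n → F),
      w.1 = Submodule.span F {Pi.single (⟨0, by omega⟩ : Fin n) (1 : F)} → Module.finrank F (σ w).1 = 1)
    (hfix : ∀ (w : InVert F (Fin n → F)) (i : Fin n), (i : ℕ) < k - 1 →
      w.1 = Submodule.span F {Pi.single i (1 : F)} → (σ w).1 = w.1) :
    ∃ A : Matrix (Fin n) (Fin n) F, IsUnit A ∧
      ∀ (w : InVert F (Fin n → F)) (j : Fin n), (j : ℕ) < k →
        w.1 = Submodule.span F {Pi.single j (1 : F)} →
          Submodule.map A.mulVecLin (σ w).1 = w.1 := by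
  classical
  have hkn : k - 1 < n := by omega
  set jk : Fin n := ⟨k - 1, hkn⟩ with hjk
  set x := lvert (F := F) hn jk with hxdef
  have hσl : ∀ i : Fin n, (i : ℕ) < k - 1 → σ (lvert (F := F) hn i) = lvert hn i :=
    fun i hi => Subtype.ext (hfix _ i hi rfl)
  -- Step A : the image of [e_{k-1}] is one-dimensional
  have hrank1 : finrank F ((σ x).1) = 1 := by
    rcases Nat.lt_or_ge k 2 with hk2' | hk2'
    · have hk1' : k = 1 := by omega
      have hjk0 : jk = ⟨0, by omega⟩ := by apply Fin.ext; simp [hjk]; omega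
      refine h1 x ?_
      rw [hxdef]
      show Submodule.span F {eb F jk} = _
      rw [hjk0]
    · set i0 : Fin n := ⟨0, by omega⟩ with hi0
      set a := lvert (F := F) hn i0 with hadef
      have ha1 : finrank F a.1 = 1 := finrank_span_eb i0
      have hσa : σ a = a := hσl i0 (by simp [hi0]; omega)
      have hi0jk : i0 ≠ jk := by
        intro h
        have := congrArg Fin.val h
        simp [hi0, hjk] at this
        omega
      have hnadj_ax : ¬ (inclGraph F (Fin n → F)).Adj a x := by
        rintro (h | h)
        · exact hi0jk (eq_of_mem_span_eb (h.le (Submodule.mem_span_singleton_self _)))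
        · exact hi0jk (eq_of_mem_span_eb (h.le (Submodule.mem_span_singleton_self _))).symm
      have hne_ax : a ≠ x := by
        intro h
        have h0 : eb F i0 ∈ x.1 := by
          rw [← h]
          exact Submodule.mem_span_singleton_self _
        exact hi0jk (eq_of_mem_span_eb h0)
      have hSrank : finrank F ↥(Submodule.span F {eb F i0} ⊔ Submodule.span F {eb F jk}) ≤ 2 := by
        have h := Submodule.finrank_sup_add_finrank_inf_eq (Submodule.span F {eb F i0}) (Submodule.span F {eb F jk})
        rw [finrank_span_eb, finrank_span_eb] at h
        omega
      have hSbot : Submodule.span F {eb F i0} ⊔ Submodule.span F {eb F jk} ≠ ⊥ := by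
        intro h
        have h0 : eb F i0 ∈ Submodule.span F {eb F i0} ⊔ Submodule.span F {eb F jk} :=
          Submodule.mem_sup_left (Submodule.mem_span_singleton_self _)
        rw [h] at h0
        exact eb_ne_zero (F := F) i0 (by simpa using h0)
      have hStop : Submodule.span F {eb F i0} ⊔ Submodule.span F {eb F jk} ≠ ⊤ := by
        intro h
        rw [h, finrank_top, Module.finrank_fin_fun] at hSrank
        omega
      set m0 : InVert F (Fin n → F) := ⟨Submodule.span F {eb F i0} ⊔ Submodule.span F {eb F jk}, hSbot, hStop⟩ with hm0
      have hadj_am : (inclGraph F (Fin n → F)).Adj a m0 := by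
        refine Or.inl (lt_of_le_of_ne le_sup_left ?_)
        intro h
        have h0 : eb F jk ∈ a.1 := by
          rw [h]
          exact Submodule.mem_sup_right (Submodule.mem_span_singleton_self _)
        exact hi0jk (eq_of_mem_span_eb h0).symm
      have hadj_xm : (inclGraph F (Fin n → F)).Adj x m0 := by
        refine Or.inl (lt_of_le_of_ne le_sup_right ?_)
        intro h
        have h0 : eb F i0 ∈ x.1 := by
          rw [h]
          exact Submodule.mem_sup_left (Submodule.mem_span_singleton_self _)
        exact hi0jk (eq_of_mem_span_eb h0)
      have hbetween : ∀ u : InVert F (Fin n → F),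
          (inclGraph F (Fin n → F)).Adj u a → (inclGraph F (Fin n → F)).Adj u m0 →
          (inclGraph F (Fin n → F)).Adj u x := by
        intro u hua hum
        have hau : a.1 < u.1 := atom_lt ha1 hua.symm
        rcases hum with hum | hum
        · exfalso
          have h1' := Submodule.finrank_lt_finrank_of_lt hau
          have h2' := Submodule.finrank_lt_finrank_of_lt hum
          rw [ha1] at h1'
          have h3' : finrank F m0.1 ≤ 2 := hSrank
          omega
        · refine Or.inr (lt_of_le_of_lt ?_ hum)
          exact le_sup_right
      have hadj_aν : (inclGraph F (Fin n → F)).Adj a (σ m0) := by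
        have := σ.map_adj_iff.2 hadj_am
        rwa [hσa] at this
      have hadj_xν : (inclGraph F (Fin n → F)).Adj (σ x) (σ m0) := σ.map_adj_iff.2 hadj_xm
      have hbetween' : ∀ u : InVert F (Fin n → F),
          (inclGraph F (Fin n → F)).Adj u a → (inclGraph F (Fin n → F)).Adj u (σ m0) →
          (inclGraph F (Fin n → F)).Adj u (σ x) := by
        intro u h1u h2u
        have e1 : σ (σ.symm u) = u := σ.apply_symm_apply u
        have hmain := hbetween (σ.symm u) ?_ ?_
        · have := σ.map_adj_iff.2 hmain
          rwa [e1] at this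
        · apply σ.map_adj_iff.1
          rw [e1, hσa]
          exact h1u
        · apply σ.map_adj_iff.1
          rw [e1]
          exact h2u
      have hnadj_aσx : ¬ (inclGraph F (Fin n → F)).Adj a (σ x) := by
        intro h
        rw [← hσa] at h
        exact hnadj_ax (σ.map_adj_iff.1 h)
      by_contra hne1
      have hrk_pos : finrank F (σ x).1 ≠ 0 := fun h => (σ x).2.1 (Submodule.finrank_eq_zero.1 h)
      have hrk2 : 2 ≤ finrank F (σ x).1 := by omega
      have hlt_a : ¬ a.1 < (σ x).1 := fun h => hnadj_aσx (Or.inl h)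
      have haν : a.1 < (σ m0).1 := atom_lt ha1 hadj_aν
      have hWν : (σ x).1 < (σ m0).1 := by
        rcases hadj_xν with h | h
        · exact h
        · exact absurd (Or.inl (lt_trans haν h)) hnadj_aσx
      have hinf : a.1 ⊓ (σ x).1 = ⊥ := by
        by_contra hib
        have h1' : finrank F ↥(a.1 ⊓ (σ x).1) ≠ 0 := fun h => hib (Submodule.finrank_eq_zero.1 h)
        have h2' : finrank F ↥(a.1 ⊓ (σ x).1) ≤ finrank F ↥a.1 := Submodule.finrank_mono inf_le_left
        have heq : a.1 ⊓ (σ x).1 = a.1 := Submodule.eq_of_le_of_finrank_eq inf_le_left (by omega)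
        have hle : a.1 ≤ (σ x).1 := by rw [← heq]; exact inf_le_right
        rcases eq_or_lt_of_le hle with heq2 | hlt2
        · rw [← heq2] at hrk2; omega
        · exact hlt_a hlt2
      have hsup : finrank F ↥(a.1 ⊔ (σ x).1) = 1 + finrank F (σ x).1 := by
        have h := Submodule.finrank_sup_add_finrank_inf_eq a.1 (σ x).1
        rw [hinf, finrank_bot] at h
        omega
      have hν3 : 3 ≤ finrank F (σ m0).1 := by
        have hle : a.1 ⊔ (σ x).1 ≤ (σ m0).1 := sup_le haν.le hWν.le
        have := Submodule.finrank_mono hle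
        omega
      have hWa : ¬ (σ x).1 ≤ a.1 := by
        intro h
        have := Submodule.finrank_mono h
        omega
      obtain ⟨w, hw1, hw2⟩ := SetLike.not_le_iff_exists.1 hWa
      have hw0 : w ≠ 0 := fun h0 => hw2 (by rw [h0]; exact Submodule.zero_mem _)
      have hU'rank : finrank F ↥(a.1 ⊔ Submodule.span F {w}) ≤ 2 := by
        have h := Submodule.finrank_sup_add_finrank_inf_eq a.1 (Submodule.span F {w})
        rw [finrank_span_singleton hw0] at h
        omega
      have hUbot : a.1 ⊔ Submodule.span F {w} ≠ ⊥ := by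
        intro h
        have h0 : eb F i0 ∈ a.1 ⊔ Submodule.span F {w} :=
          Submodule.mem_sup_left (Submodule.mem_span_singleton_self _)
        rw [h] at h0
        exact eb_ne_zero (F := F) i0 (by simpa using h0)
      have hUtop : a.1 ⊔ Submodule.span F {w} ≠ ⊤ := by
        intro h
        rw [h, finrank_top, Module.finrank_fin_fun] at hU'rank
        omega
      set Uv : InVert F (Fin n → F) := ⟨a.1 ⊔ Submodule.span F {w}, hUbot, hUtop⟩ with hUv
      have hUa : (inclGraph F (Fin n → F)).Adj Uv a := by
        refine Or.inr (lt_of_le_of_ne le_sup_left ?_)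
        intro h
        exact hw2 (by rw [h]; exact Submodule.mem_sup_right (Submodule.mem_span_singleton_self _))
      have hUν : (inclGraph F (Fin n → F)).Adj Uv (σ m0) := by
        refine Or.inl (lt_of_le_of_ne ?_ ?_)
        · refine sup_le haν.le ?_
          refine le_trans ?_ hWν.le
          rw [Submodule.span_le, Set.singleton_subset_iff]
          exact hw1
        · intro h
          have : finrank F (σ m0).1 ≤ 2 := by rw [← h]; exact hU'rank
          omega
      have hUrk : finrank F ↥Uv.1 ≤ 2 := hU'rank
      rcases hbetween' Uv hUa hUν with h | h
      · exact hlt_a (lt_of_le_of_lt le_sup_left h)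
      · have := Submodule.finrank_lt_finrank_of_lt h
        omega
  -- extract a generator of (σ x).1
  obtain ⟨v, hvmem, hvne⟩ := Submodule.ne_bot_iff _ |>.1 (σ x).2.1
  have hspanv : (σ x).1 = Submodule.span F {v} := by
    have hle : Submodule.span F {v} ≤ (σ x).1 := by
      rw [Submodule.span_le, Set.singleton_subset_iff]
      exact hvmem
    exact (Submodule.eq_of_le_of_finrank_eq hle (by rw [finrank_span_singleton hvne, hrank1])).symm
  -- Step B : v is not supported on the first k-1 coordinates
  have hvnotN : v ∉ coordSub F n (k - 1) := by
    intro hvN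
    rcases Nat.lt_or_ge k 2 with hk2' | hk2'
    · apply hvne
      funext i
      exact hvN i (by omega)
    · have hMbot : coordSub F n (k - 1) ≠ ⊥ := by
        intro h
        have h0 : eb F (⟨0, by omega⟩ : Fin n) ∈ coordSub F n (k - 1) := eb_mem_coordSub (by simp; omega)
        rw [h] at h0
        exact eb_ne_zero (F := F) (⟨0, by omega⟩ : Fin n) (by simpa using h0)
      have hMtop : coordSub F n (k - 1) ≠ ⊤ := by
        intro h
        have h0 : eb F jk ∈ coordSub F n (k - 1) := by rw [h]; exact Submodule.mem_top
        have := h0 jk (by simp [hjk])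
        simp [eb] at this
      set Mv : InVert F (Fin n → F) := ⟨coordSub F n (k - 1), hMbot, hMtop⟩ with hMv
      have hσM : σ Mv = Mv := by
        rcases Nat.lt_or_ge k 3 with hk3 | hk3
        · have hMeq : coordSub F n (k - 1) = Submodule.span F {eb F (⟨0, by omega⟩ : Fin n)} := by
            apply le_antisymm
            · refine le_trans (coordSub_le_span _) (Submodule.span_le.2 ?_)
              rintro y ⟨i, hi, rfl⟩
              simp only [Set.mem_setOf_eq] at hi
              have hieq : i = (⟨0, by omega⟩ : Fin n) := Fin.ext (by simp; omega)
              rw [hieq]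
              exact Submodule.mem_span_singleton_self _
            · rw [Submodule.span_le, Set.singleton_subset_iff]
              exact eb_mem_coordSub (by simp; omega)
          have hMl : Mv = lvert (F := F) hn ⟨0, by omega⟩ := Subtype.ext hMeq
          rw [hMl]
          exact hσl _ (by simp; omega)
        · -- k ≥ 3 : uniqueness of the minimal common neighbour
          have hNle : ∀ u : InVert F (Fin n → F),
              (∀ j' : Fin n, (j' : ℕ) < k - 1 → (inclGraph F (Fin n → F)).Adj (lvert hn j') u) →
              coordSub F n (k - 1) ≤ u.1 := by
            intro u hu
            refine le_trans (coordSub_le_span _) (Submodule.span_le.2 ?_)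
            rintro y ⟨i, hi, rfl⟩
            simp only [Set.mem_setOf_eq] at hi
            exact (atom_lt (finrank_span_eb i) (hu i hi)).le (Submodule.mem_span_singleton_self _)
          have hNnotle : ∀ j' : Fin n, (j' : ℕ) < k - 1 →
              ¬ coordSub F n (k - 1) ≤ Submodule.span F {eb F j'} := by
            intro j' hj' hle
            by_cases h0 : (j' : ℕ) = 0
            · have h1m : eb F (⟨1, by omega⟩ : Fin n) ∈ coordSub F n (k - 1) :=
                eb_mem_coordSub (by simp; omega)
              have heq := congrArg Fin.val (eq_of_mem_span_eb (hle h1m))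
              simp at heq
              omega
            · have h1m : eb F (⟨0, by omega⟩ : Fin n) ∈ coordSub F n (k - 1) :=
                eb_mem_coordSub (by simp; omega)
              have heq := congrArg Fin.val (eq_of_mem_span_eb (hle h1m))
              simp at heq
              omega
          have hadjM : ∀ j' : Fin n, (j' : ℕ) < k - 1 →
              (inclGraph F (Fin n → F)).Adj (lvert hn j') Mv := by
            intro j' hj'
            refine Or.inl (lt_of_le_of_ne ?_ ?_)
            · exact Submodule.span_le.2 (Set.singleton_subset_iff.2 (eb_mem_coordSub hj'))
            · intro h
              exact hNnotle j' hj' h.ge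
          have hadjY : ∀ j' : Fin n, (j' : ℕ) < k - 1 →
              (inclGraph F (Fin n → F)).Adj (lvert hn j') (σ Mv) := by
            intro j' hj'
            have := σ.map_adj_iff.2 (hadjM j' hj')
            rwa [hσl j' hj'] at this
          have hNleY : coordSub F n (k - 1) ≤ (σ Mv).1 := hNle _ hadjY
          rcases eq_or_lt_of_le hNleY with heq | hlt
          · exact Subtype.ext heq.symm
          · exfalso
            have hex : ∃ z, z ∉ (σ Mv).1 := by
              by_contra hz
              push_neg at hz
              exact (σ Mv).2.2 (Submodule.eq_top_iff'.2 hz)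
            obtain ⟨z, hz⟩ := hex
            have hz0 : z ≠ 0 := fun h => hz (by rw [h]; exact Submodule.zero_mem _)
            have hfr : finrank F ↥(coordSub F n (k - 1) ⊔ Submodule.span F {z}) ≤
                finrank F (coordSub F n (k - 1)) + 1 := by
              have h := Submodule.finrank_sup_add_finrank_inf_eq (coordSub F n (k - 1)) (Submodule.span F {z})
              rw [finrank_span_singleton hz0] at h
              omega
            have hNY : finrank F (coordSub F n (k - 1)) < finrank F (σ Mv).1 :=
              Submodule.finrank_lt_finrank_of_lt hlt
            have hYtop : finrank F (σ Mv).1 < n := by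
              have := Submodule.finrank_lt (σ Mv).2.2
              rwa [Module.finrank_fin_fun] at this
            have hUtop : coordSub F n (k - 1) ⊔ Submodule.span F {z} ≠ ⊤ := by
              intro h
              rw [h, finrank_top, Module.finrank_fin_fun] at hfr
              omega
            have hUbot : coordSub F n (k - 1) ⊔ Submodule.span F {z} ≠ ⊥ := by
              intro h
              have h0 : eb F (⟨0, by omega⟩ : Fin n) ∈ coordSub F n (k - 1) ⊔ Submodule.span F {z} :=
                Submodule.mem_sup_left (eb_mem_coordSub (by simp; omega))
              rw [h] at h0
              exact eb_ne_zero (F := F) (⟨0, by omega⟩ : Fin n) (by simpa using h0)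
            set Uv : InVert F (Fin n → F) := ⟨coordSub F n (k - 1) ⊔ Submodule.span F {z}, hUbot, hUtop⟩ with hUv
            have hadjU : ∀ j' : Fin n, (j' : ℕ) < k - 1 →
                (inclGraph F (Fin n → F)).Adj (lvert hn j') Uv := by
              intro j' hj'
              refine Or.inl (lt_of_le_of_ne ?_ ?_)
              · exact le_trans (Submodule.span_le.2 (Set.singleton_subset_iff.2 (eb_mem_coordSub hj'))) le_sup_left
              · intro h
                exact hNnotle j' hj' (le_trans le_sup_left h.ge)
            have hprop : Uv = σ Mv ∨ (inclGraph F (Fin n → F)).Adj (σ Mv) Uv := by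
              have h1' := hNle (σ.symm Uv) (fun j' hj' => by
                apply σ.map_adj_iff.1
                rw [σ.apply_symm_apply, hσl j' hj']
                exact hadjU j' hj')
              rcases eq_or_lt_of_le h1' with heq' | hlt'
              · left
                have h2' : σ.symm Uv = Mv := Subtype.ext heq'.symm
                rw [← h2', σ.apply_symm_apply]
              · right
                have h2' : (inclGraph F (Fin n → F)).Adj Mv (σ.symm Uv) := Or.inl hlt'
                have := σ.map_adj_iff.2 h2'
                rwa [σ.apply_symm_apply] at this
            have hUrk2 : finrank F ↥Uv.1 ≤ finrank F (coordSub F n (k - 1)) + 1 := hfr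
            rcases hprop with h | h
            · apply hz
              rw [← congrArg Subtype.val h]
              exact Submodule.mem_sup_right (Submodule.mem_span_singleton_self _)
            · rcases h with h | h
              · have := Submodule.finrank_lt_finrank_of_lt h
                omega
              · exact hz (h.le (Submodule.mem_sup_right (Submodule.mem_span_singleton_self _)))
      -- now transport incomparability of x and Mv
      have hxM : ¬ (inclGraph F (Fin n → F)).Adj x Mv := by
        rintro (h | h)
        · have h0 : eb F jk ∈ Mv.1 := h.le (Submodule.mem_span_singleton_self _)
          have := h0 jk (by simp [hjk])
          simp [eb] at this
        · have h0 : eb F (⟨0, by omega⟩ : Fin n) ∈ Submodule.span F {eb F jk} :=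
            h.le (eb_mem_coordSub (by simp; omega))
          have heq := congrArg Fin.val (eq_of_mem_span_eb h0)
          simp [hjk] at heq
          omega
      have hxMne : x ≠ Mv := by
        intro h
        have h2 : eb F jk ∈ Mv.1 := by
          rw [← h]
          exact Submodule.mem_span_singleton_self _
        have := h2 jk (by simp [hjk])
        simp [eb] at this
      have h1' : ¬ (inclGraph F (Fin n → F)).Adj (σ x) Mv := by
        intro h
        rw [← hσM] at h
        exact hxM (σ.map_adj_iff.1 h)
      have h2' : σ x ≠ Mv := by
        intro h
        rw [← hσM] at h
        exact hxMne (σ.injective h)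
      have hle : (σ x).1 ≤ Mv.1 := by
        rw [hspanv]
        rw [Submodule.span_le, Set.singleton_subset_iff]
        exact hvN
      rcases eq_or_lt_of_le hle with heq | hlt
      · exact h2' (Subtype.ext heq)
      · exact h1' (Or.inl hlt)
  -- Step C : construct the matrix
  have hvex : ∃ r : Fin n, k - 1 ≤ (r : ℕ) ∧ v r ≠ 0 := by
    by_contra hcon
    push_neg at hcon
    exact hvnotN (fun i hi => hcon i hi)
  obtain ⟨r, hr1, hr2⟩ := hvex
  set c : Fin n → (Fin n → F) := fun j => if j = jk then v else if j = r then eb F jk else eb F j with hc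
  set B : Matrix (Fin n) (Fin n) F := Matrix.of (fun i j => c j i) with hB
  have hBe : ∀ j : Fin n, B.mulVecLin (eb F j) = c j := by
    intro j
    funext i
    simp [hB, Matrix.mulVecLin_apply, Matrix.mulVec, dotProduct, eb, Pi.single_apply]
  have hsurj : Function.Surjective B.mulVecLin := by
    rw [← LinearMap.range_eq_top, Matrix.range_mulVecLin]
    have hBt : Bᵀ = c := by
      funext j i
      rfl
    rw [show B.col = c from hBt, eq_top_iff]
    intro y _
    have hebmem : ∀ i : Fin n, i ≠ r → eb F i ∈ Submodule.span F (Set.range c) := by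
      intro i hir
      by_cases hijk : i = jk
      · subst hijk
        have hrjk : r ≠ jk := fun h => hir h.symm
        exact Submodule.subset_span ⟨r, by simp [hc, hrjk]⟩
      · exact Submodule.subset_span ⟨i, by simp [hc, hijk, hir]⟩
    have hermem : eb F r ∈ Submodule.span F (Set.range c) := by
      have hadd : v r • eb F r + ∑ j ∈ Finset.univ.erase r, v j • eb F j = ∑ j, v j • eb F j :=
        Finset.add_sum_erase _ (fun j => v j • eb F j) (Finset.mem_univ r)
      have hadd2 : v r • eb F r + ∑ j ∈ Finset.univ.erase r, v j • eb F j = v :=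
        hadd.trans (eq_sum_smul_eb v).symm
      have hsum : v r • eb F r = v - ∑ j ∈ Finset.univ.erase r, v j • eb F j :=
        eq_sub_of_add_eq hadd2
      have hmem : v r • eb F r ∈ Submodule.span F (Set.range c) := by
        rw [hsum]
        refine Submodule.sub_mem _ (Submodule.subset_span ⟨jk, by simp [hc]⟩)
          (Submodule.sum_mem _ fun j hj => Submodule.smul_mem _ _ ?_)
        exact hebmem j (Finset.ne_of_mem_erase hj)
      have := Submodule.smul_mem _ (v r)⁻¹ hmem
      rwa [smul_smul, inv_mul_cancel₀ hr2, one_smul] at this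
    rw [eq_sum_smul_eb y]
    refine Submodule.sum_mem _ fun i _ => Submodule.smul_mem _ _ ?_
    by_cases hir : i = r
    · rw [hir]; exact hermem
    · exact hebmem i hir
  have hinj : Function.Injective B.mulVecLin := LinearMap.injective_iff_surjective.2 hsurj
  set g := LinearEquiv.ofBijective B.mulVecLin ⟨hinj, hsurj⟩ with hg
  set A := LinearMap.toMatrix' (g.symm : (Fin n → F) →ₗ[F] (Fin n → F)) with hA
  have hAmul : A.mulVecLin = (g.symm : (Fin n → F) →ₗ[F] (Fin n → F)) := by
    rw [hA, ← Matrix.toLin'_apply', Matrix.toLin'_toMatrix']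
  have hgap : ∀ j : Fin n, g (eb F j) = c j := by
    intro j
    rw [hg]
    show B.mulVecLin (eb F j) = c j
    exact hBe j
  refine ⟨A, ?_, ?_⟩
  · have hcomp1 : ((g.symm : (Fin n → F) →ₗ[F] (Fin n → F)).comp (g : (Fin n → F) →ₗ[F] (Fin n → F))) = LinearMap.id := by
      ext y
      simp
    have hcomp2 : ((g : (Fin n → F) →ₗ[F] (Fin n → F)).comp (g.symm : (Fin n → F) →ₗ[F] (Fin n → F))) = LinearMap.id := by
      ext y
      simp
    have h1' : A * LinearMap.toMatrix' (g : (Fin n → F) →ₗ[F] (Fin n → F)) = 1 := by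
      rw [hA, ← LinearMap.toMatrix'_comp, hcomp1, LinearMap.toMatrix'_id]
    have h2' : LinearMap.toMatrix' (g : (Fin n → F) →ₗ[F] (Fin n → F)) * A = 1 := by
      rw [hA, ← LinearMap.toMatrix'_comp, hcomp2, LinearMap.toMatrix'_id]
    exact ⟨⟨A, LinearMap.toMatrix' (g : (Fin n → F) →ₗ[F] (Fin n → F)), h1', h2'⟩, rfl⟩
  · intro w j hj hw
    rw [hAmul]
    by_cases hjlt : (j : ℕ) < k - 1
    · rw [hfix w j hjlt hw, hw, Submodule.map_span, Set.image_singleton]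
      simp only [LinearEquiv.coe_coe]
      have hje : g.symm (Pi.single j (1 : F)) = Pi.single j (1 : F) := by
        have hcj : c j = eb F j := by
          have hjjk : j ≠ jk := by
            intro h
            have := congrArg Fin.val h
            simp [hjk] at this
            omega
          have hjr : j ≠ r := by
            intro h
            have := congrArg Fin.val h
            omega
          simp [hc, hjjk, hjr]
        have h1' : g (Pi.single j (1 : F)) = Pi.single j (1 : F) := by
          have := hgap j
          rw [hcj] at this
          exact this
        conv_lhs => rw [← h1']
        rw [g.symm_apply_apply]
      rw [hje]
    · have hjeq : j = jk := Fin.ext (by simp [hjk]; omega)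
      have hwx : w = x := by
        apply Subtype.ext
        rw [hw, hjeq]
        rfl
      rw [hwx, hspanv, Submodule.map_span, Set.image_singleton]
      simp only [LinearEquiv.coe_coe]
      have hgv : g.symm v = eb F jk := by
        have h1' : g (eb F jk) = v := by
          rw [hgap jk]
          simp [hc]
        rw [← h1', g.symm_apply_apply]
      rw [hgv]
      show Submodule.span F {eb F jk} = x.1
      rfl
end

section
/- Let F_q be a finite field and let V be an n-dimensional vector space over F_q with n ≥ 3. Let σ be a graph automorphism of In(V). Then for every 1-dimensional subspace L of V, the dimension of σ(L) is either 1 or n − 1. -/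
set_option linter.unusedSectionVars false

namespace InclGraphAux

open Module Submodule

variable (F : Type*) [Field F] [Fintype F]

/-- Number of subspaces of the model `m`-dimensional space over `F`. -/
noncomputable def subCard (m : ℕ) : ℕ := Nat.card (Submodule F (Fin m → F))

variable {V : Type*} [AddCommGroup V] [Module F V] [FiniteDimensional F V]

lemma finite_submodule : Finite (Submodule F V) := by
  have : Finite V := Module.finite_of_finite F
  exact Finite.of_injective (fun U : Submodule F V => (U : Set V)) SetLike.coe_injective

lemma card_submodule : Nat.card (Submodule F V) = subCard F (finrank F V) := by
  have e : V ≃ₗ[F] (Fin (finrank F V) → F) :=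
    LinearEquiv.ofFinrankEq _ _ (by rw [Module.finrank_fin_fun])
  exact Nat.card_congr (Submodule.orderIsoMapComap e).toEquiv

lemma card_le_subCard (W : Submodule F V) :
    Nat.card {U : Submodule F V // U ≤ W} = subCard F (finrank F W) := by
  rw [← card_submodule F]
  exact (Nat.card_congr (Submodule.MapSubtype.orderIso W).toEquiv).symm

lemma card_ge_subCard (W : Submodule F V) :
    Nat.card {U : Submodule F V // W ≤ U} = subCard F (finrank F V - finrank F W) := by
  have h := Submodule.finrank_quotient_add_finrank W
  have hq : finrank F (V ⧸ W) = finrank F V - finrank F W := by omega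
  rw [← hq, ← card_submodule F]
  exact (Nat.card_congr (Submodule.comapMkQRelIso W).toEquiv).symm

lemma step_card {B C : Submodule F V} (A : Submodule F V) (hBC : B < C) :
    {U : Submodule F V | U ≤ B ∧ ¬ U ≤ A}.ncard < {U : Submodule F V | U ≤ C ∧ ¬ U ≤ B}.ncard := by
  haveI := finite_submodule F (V := V)
  obtain ⟨f, hfC, hfB⟩ := SetLike.exists_of_lt hBC
  have hf0 : f ≠ 0 := fun h => hfB (h ▸ B.zero_mem)
  have hbot : Submodule.span F {f} ⊓ B = ⊥ :=
    (((Submodule.disjoint_span_singleton' hf0).2 hfB).symm).eq_bot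
  set φ : Submodule F V → Submodule F V := fun U => U ⊔ Submodule.span F {f} with hφ
  have hinter : ∀ U : Submodule F V, U ≤ B → φ U ⊓ B = U := by
    intro U hU
    rw [hφ]
    simp only
    rw [sup_inf_assoc_of_le _ hU, hbot, sup_bot_eq]
  have hspan_mem : Submodule.span F {f} ∈ {U : Submodule F V | U ≤ C ∧ ¬ U ≤ B} :=
    ⟨(Submodule.span_le).2 (Set.singleton_subset_iff.2 hfC),
     fun h => hfB (h (Submodule.mem_span_singleton_self f))⟩
  have himg : φ '' {U : Submodule F V | U ≤ B ∧ ¬ U ≤ A}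
      ⊂ {U : Submodule F V | U ≤ C ∧ ¬ U ≤ B} := by
    constructor
    · rintro _ ⟨U, ⟨hUB, _⟩, rfl⟩
      exact ⟨sup_le (hUB.trans hBC.le) ((Submodule.span_le).2 (Set.singleton_subset_iff.2 hfC)),
        fun h => hfB (h (Submodule.mem_sup_right (Submodule.mem_span_singleton_self f)))⟩
    · intro hsub
      obtain ⟨U, ⟨hUB, hUA⟩, hEq⟩ := hsub hspan_mem
      have hU : U = ⊥ := by rw [← hinter U hUB, hEq, hbot]
      exact hUA (hU ▸ bot_le)
  have hinj : Set.InjOn φ {U : Submodule F V | U ≤ B ∧ ¬ U ≤ A} := by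
    intro U hU U' hU' h
    rw [← hinter U hU.1, ← hinter U' hU'.1, h]
  calc {U : Submodule F V | U ≤ B ∧ ¬ U ≤ A}.ncard
      = (φ '' {U : Submodule F V | U ≤ B ∧ ¬ U ≤ A}).ncard :=
        (Set.ncard_image_of_injOn hinj).symm
    _ < _ := Set.ncard_lt_ncard himg (Set.toFinite _)

lemma finrank_flag {n : ℕ} (b : Basis (Fin n) F V) (j : Fin (n + 1)) :
    finrank F (b.flag j) = j := by
  induction j using Fin.induction with
  | zero => rw [Basis.flag_zero]; simp
  | succ i ih =>
      rw [Basis.flag_succ]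
      have hnm : b i ∉ b.flag i.castSucc := by
        rw [b.self_mem_flag_iff]; exact lt_irrefl _
      have hdisj : (Submodule.span F {b i}) ⊓ b.flag i.castSucc = ⊥ :=
        (((Submodule.disjoint_span_singleton' (b.ne_zero i)).2 hnm).symm).eq_bot
      have h := Submodule.finrank_sup_add_finrank_inf_eq (F ∙ b i) (b.flag i.castSucc)
      rw [hdisj, finrank_bot, finrank_span_singleton (b.ne_zero i), ih] at h
      rw [Fin.val_succ]
      simp only [Fin.coe_castSucc] at h
      omega

lemma tele (A B : Submodule F V) (h : A ≤ B) :
    subCard F (finrank F B)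
      = subCard F (finrank F A) + {U : Submodule F V | U ≤ B ∧ ¬ U ≤ A}.ncard := by
  haveI := finite_submodule F (V := V)
  have hsplit : {U : Submodule F V | U ≤ B}
      = {U : Submodule F V | U ≤ A} ∪ {U : Submodule F V | U ≤ B ∧ ¬ U ≤ A} := by
    ext U
    simp only [Set.mem_setOf_eq, Set.mem_union]
    constructor
    · intro hUB
      by_cases hUA : U ≤ A
      · exact Or.inl hUA
      · exact Or.inr ⟨hUB, hUA⟩
    · rintro (hUA | ⟨hUB, _⟩)
      · exact hUA.trans h
      · exact hUB
  have hdisj : Disjoint {U : Submodule F V | U ≤ A} {U : Submodule F V | U ≤ B ∧ ¬ U ≤ A} := by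
    rw [Set.disjoint_left]
    rintro U hU ⟨_, hUA⟩
    exact hUA hU
  have hB : Nat.card {U : Submodule F V // U ≤ B} = ({U : Submodule F V | U ≤ B}).ncard :=
    Nat.card_coe_set_eq _
  have hA : Nat.card {U : Submodule F V // U ≤ A} = ({U : Submodule F V | U ≤ A}).ncard :=
    Nat.card_coe_set_eq _
  rw [← card_le_subCard, ← card_le_subCard, hA, hB, hsplit,
    Set.ncard_union_eq hdisj (Set.toFinite _) (Set.toFinite _)]

lemma monoDelta (a c : ℕ) (hac : a < c) (hc : c + 1 ≤ finrank F V) :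
    subCard F (a + 1) + subCard F c < subCard F a + subCard F (c + 1) := by
  set n := finrank F V with hn
  let b := Module.finBasis F V
  let Fl : ℕ → Submodule F V := fun j => b.flag ⟨min j n, by omega⟩
  have hFl_rank : ∀ j, j ≤ n → finrank F (Fl j) = j := by
    intro j hj
    have := finrank_flag F b ⟨min j n, by omega⟩
    simpa [Fl, min_eq_left hj] using this
  have hFl_lt : ∀ {j j' : ℕ}, j < j' → j' ≤ n → Fl j < Fl j' := by
    intro j j' h hj'
    exact b.flag_strictMono (by simp only [Fin.lt_def]; omega)
  let D : ℕ → ℕ := fun j => {U : Submodule F V | U ≤ Fl (j + 1) ∧ ¬ U ≤ Fl j}.ncard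
  have hT : ∀ j, j + 1 ≤ n → subCard F (j + 1) = subCard F j + D j := by
    intro j hj
    have := tele F (Fl j) (Fl (j + 1)) (hFl_lt (Nat.lt_succ_self j) hj).le
    rwa [hFl_rank _ hj, hFl_rank _ (by omega)] at this
  have hDstep : ∀ j, j + 2 ≤ n → D j < D (j + 1) := by
    intro j hj
    exact step_card F (Fl j) (hFl_lt (Nat.lt_succ_self (j + 1)) hj)
  have hD : ∀ j' j, j < j' → j' + 1 ≤ n → D j < D j' := by
    intro j'
    induction j' with
    | zero => omega
    | succ m ih =>
        intro j h hj'
        rcases Nat.lt_or_ge j m with hm | hm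
        · exact (ih j hm (by omega)).trans (hDstep m (by omega))
        · have : j = m := by omega
          subst this
          exact hDstep j (by omega)
  have h1 : subCard F (a + 1) = subCard F a + D a := hT a (by omega)
  have h2 : subCard F (c + 1) = subCard F c + D c := hT c hc
  have h3 : D a < D c := hD c a hac hc
  omega

lemma middle_lt (n : ℕ) (hn : n = finrank F V) :
    ∀ k, 2 ≤ k → 2 * k ≤ n →
      subCard F k + subCard F (n - k) < subCard F 1 + subCard F (n - 1) := by
  subst hn
  intro k
  induction k with
  | zero => omega
  | succ m ih =>
      intro h2 hk
      rcases Nat.lt_or_ge m 2 with hle | hgt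
      · -- m + 1 = 2
        have hm : m = 1 := by omega
        subst hm
        have := monoDelta F (V := V) 1 (finrank F V - 2) (by omega) (by omega)
        have e2 : finrank F V - 2 + 1 = finrank F V - 1 := by omega
        rw [e2] at this
        exact this
      · have step : subCard F (m + 1) + subCard F (finrank F V - (m + 1))
            < subCard F m + subCard F (finrank F V - m) := by
          have := monoDelta F (V := V) m (finrank F V - m - 1) (by omega) (by omega)
          have e1 : finrank F V - (m + 1) = finrank F V - m - 1 := by omega
          have e2 : finrank F V - m - 1 + 1 = finrank F V - m := by omega
          rw [e1]
          rw [e2] at this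
          exact this
        exact step.trans (ih (by omega) (by omega))

lemma middle_lt' (k : ℕ) (h2 : 2 ≤ k) (hk : k ≤ finrank F V - 2) (hn : 3 ≤ finrank F V) :
    subCard F k + subCard F (finrank F V - k)
      < subCard F 1 + subCard F (finrank F V - 1) := by
  set n := finrank F V with hn'
  rcases le_or_gt (2 * k) n with h | h
  · exact middle_lt F (V := V) n hn' k h2 h
  · have h2' : 2 ≤ n - k := by omega
    have hk' : 2 * (n - k) ≤ n := by omega
    have := middle_lt F (V := V) n hn' (n - k) h2' hk'
    rw [show n - (n - k) = k by omega] at this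
    omega

lemma deg_formula (W : InVert F V) :
    Nat.card {U : InVert F V // (inclGraph F V).Adj W U} + 4
      = subCard F (finrank F W.1) + subCard F (finrank F V - finrank F W.1) := by
  haveI := finite_submodule F (V := V)
  set A1 : Set (Submodule F V) := {U | U ≠ ⊥ ∧ U < W.1} with hA1
  set A2 : Set (Submodule F V) := {U | U ≠ ⊤ ∧ W.1 < U} with hA2
  have e : {U : InVert F V // (inclGraph F V).Adj W U} ≃ ↥(A1 ∪ A2) :=
    { toFun := fun x => ⟨x.1.1, by
        rcases (show W.1 < x.1.1 ∨ x.1.1 < W.1 from x.2) with h | h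
        · exact Set.mem_union_right _ ⟨x.1.2.2, h⟩
        · exact Set.mem_union_left _ ⟨x.1.2.1, h⟩⟩
      invFun := fun y =>
        ⟨⟨y.1, by
            rcases y.2 with h | h
            · exact h.1
            · exact ne_bot_of_gt h.2, by
            rcases y.2 with h | h
            · exact ne_top_of_lt h.2
            · exact h.1⟩, by
          rcases y.2 with h | h
          · exact show W.1 < y.1 ∨ y.1 < W.1 from Or.inr h.2
          · exact show W.1 < y.1 ∨ y.1 < W.1 from Or.inl h.2⟩
      left_inv := fun x => Subtype.ext (Subtype.ext rfl)
      right_inv := fun y => Subtype.ext rfl }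
  have hcard : Nat.card {U : InVert F V // (inclGraph F V).Adj W U} = (A1 ∪ A2).ncard := by
    rw [Nat.card_congr e, Nat.card_coe_set_eq]
  have hdisj12 : Disjoint A1 A2 := by
    rw [Set.disjoint_left]
    rintro U ⟨_, h1⟩ ⟨_, h2⟩
    exact lt_asymm h1 h2
  have hsplit1 : {U : Submodule F V | U ≤ W.1} = A1 ∪ {⊥, W.1} := by
    ext U
    simp only [hA1, Set.mem_setOf_eq, Set.mem_union, Set.mem_insert_iff, Set.mem_singleton_iff]
    constructor
    · intro hle
      by_cases hb : U = ⊥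
      · exact Or.inr (Or.inl hb)
      · by_cases hw : U = W.1
        · exact Or.inr (Or.inr hw)
        · exact Or.inl ⟨hb, lt_of_le_of_ne hle hw⟩
    · rintro (⟨_, h⟩ | h | h)
      · exact h.le
      · rw [h]; exact bot_le
      · rw [h]
  have hsplit2 : {U : Submodule F V | W.1 ≤ U} = A2 ∪ {W.1, ⊤} := by
    ext U
    simp only [hA2, Set.mem_setOf_eq, Set.mem_union, Set.mem_insert_iff, Set.mem_singleton_iff]
    constructor
    · intro hle
      by_cases ht : U = ⊤
      · exact Or.inr (Or.inr ht)
      · by_cases hw : U = W.1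
        · exact Or.inr (Or.inl hw)
        · exact Or.inl ⟨ht, lt_of_le_of_ne hle (Ne.symm hw)⟩
    · rintro (⟨_, h⟩ | h | h)
      · exact h.le
      · rw [h]
      · rw [h]; exact le_top
  have hd1 : Disjoint A1 ({⊥, W.1} : Set (Submodule F V)) := by
    rw [Set.disjoint_right]
    rintro U (h | h) hU
    · exact hU.1 h
    · exact absurd hU.2 (h ▸ lt_irrefl _)
  have hd2 : Disjoint A2 ({W.1, ⊤} : Set (Submodule F V)) := by
    rw [Set.disjoint_right]
    rintro U (h | h) hU
    · exact absurd hU.2 (h ▸ lt_irrefl _)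
    · exact hU.1 h
  have hx1 : Nat.card {U : Submodule F V // U ≤ W.1}
      = ({U : Submodule F V | U ≤ W.1}).ncard := Nat.card_coe_set_eq _
  have hx2 : Nat.card {U : Submodule F V // W.1 ≤ U}
      = ({U : Submodule F V | W.1 ≤ U}).ncard := Nat.card_coe_set_eq _
  have hc1 : subCard F (finrank F W.1) = A1.ncard + 2 := by
    rw [← card_le_subCard, hx1, hsplit1,
      Set.ncard_union_eq hd1 (Set.toFinite _) (Set.toFinite _),
      Set.ncard_pair (Ne.symm W.2.1)]
  have hc2 : subCard F (finrank F V - finrank F W.1) = A2.ncard + 2 := by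
    rw [← card_ge_subCard, hx2, hsplit2,
      Set.ncard_union_eq hd2 (Set.toFinite _) (Set.toFinite _),
      Set.ncard_pair W.2.2]
  rw [hcard, Set.ncard_union_eq hdisj12 (Set.toFinite _) (Set.toFinite _), hc1, hc2]
  omega

end InclGraphAux

open InclGraphAux Module

/-- For any graph automorphism `σ` of `In(V)` with `dim V = n ≥ 3`, the image of a
1-dimensional subspace has dimension `1` or `n - 1`. -/
theorem inclGraph_aut_image_of_line
    (F V : Type*) [Field F] [Fintype F] [AddCommGroup V] [Module F V] [FiniteDimensional F V]
    (hn : 3 ≤ Module.finrank F V)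
    (σ : inclGraph F V ≃g inclGraph F V) :
    ∀ L : InVert F V, Module.finrank F L.1 = 1 →
      Module.finrank F (σ L).1 = 1 ∨ Module.finrank F (σ L).1 = Module.finrank F V - 1 := by
  intro L hL
  by_contra hcon
  push_neg at hcon
  obtain ⟨h1, h2⟩ := hcon
  set M := σ L with hM
  set k := finrank F M.1 with hk
  have hktop : k < finrank F V := Submodule.finrank_lt M.2.2
  have hkbot : k ≠ 0 := by
    intro h
    exact M.2.1 (Submodule.finrank_eq_zero.mp (by rw [← hk]; exact h))
  have hdegL := deg_formula F L
  have hdegM := deg_formula F M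
  have hcards : Nat.card {U : InVert F V // (inclGraph F V).Adj L U}
      = Nat.card {U : InVert F V // (inclGraph F V).Adj M U} := by
    apply Nat.card_congr
    exact Equiv.subtypeEquiv σ.toEquiv fun U => (σ.map_adj_iff).symm
  rw [hL] at hdegL
  have heq : subCard F 1 + subCard F (finrank F V - 1)
      = subCard F k + subCard F (finrank F V - k) := by
    rw [← hdegL, ← hdegM, hcards]
  have hlt := middle_lt' F (V := V) k (by omega) (by omega) hn
  omega
end

section
/- Let F_q be a finite field, V = F_q^n with n ≥ 3, and let e₁, …, eₙ be the standard basis of V. Let σ be a graph automorphism of In(V) that fixes [eᵢ] for every i = 1, …, n. Suppose α = ∑ᵢ aᵢeᵢ is a nonzero vector of V and σ([α]) = [β] with β = ∑ᵢ bᵢeᵢ. Then for every k with 1 ≤ k ≤ n, b_k = 0 if and only if a_k = 0. -/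
section Aux

variable {F : Type*} [Field F] {n : ℕ}

/-- If a nonzero subspace is `≤ span {x}`, it equals `span {x}`. -/
private lemma eq_span_of_le_span_singleton {p : Submodule F (Fin n → F)} {x : Fin n → F}
    (hle : p ≤ Submodule.span F {x}) (hp : p ≠ ⊥) : p = Submodule.span F {x} := by
  obtain ⟨y, hy, hy0⟩ := Submodule.exists_mem_ne_zero_of_ne_bot hp
  obtain ⟨c, hc⟩ := Submodule.mem_span_singleton.mp (hle hy)
  have hc0 : c ≠ 0 := by rintro rfl; simp at hc; exact hy0 hc.symm
  refine le_antisymm hle (Submodule.span_le.mpr ?_)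
  intro z hz
  rw [Set.mem_singleton_iff] at hz
  subst hz
  have : z = c⁻¹ • y := by rw [← hc, smul_smul, inv_mul_cancel₀ hc0, one_smul]
  rw [this]; exact p.smul_mem _ hy

/-- The kernel of the `k`-th coordinate projection is a coatom. -/
private lemma ker_proj_coatom (k : Fin n) (p : Submodule F (Fin n → F))
    (h : LinearMap.ker (LinearMap.proj k : (Fin n → F) →ₗ[F] F) ≤ p) (hp : p ≠ ⊤) :
    p = LinearMap.ker (LinearMap.proj k : (Fin n → F) →ₗ[F] F) := by
  by_contra hne
  apply hp
  obtain ⟨x, hxp, hxk⟩ : ∃ x ∈ p, x ∉ LinearMap.ker (LinearMap.proj k : (Fin n → F) →ₗ[F] F) := by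
    by_contra hc; push_neg at hc; exact hne (le_antisymm hc h)
  have hxk' : x k ≠ 0 := by simpa [LinearMap.mem_ker] using hxk
  rw [Submodule.eq_top_iff']
  intro y
  have hmem : y - (y k / x k) • x ∈ LinearMap.ker (LinearMap.proj k : (Fin n → F) →ₗ[F] F) := by
    simp only [LinearMap.mem_ker, LinearMap.proj_apply, Pi.sub_apply, Pi.smul_apply,
      smul_eq_mul]
    field_simp
    ring
  have := p.add_mem (h hmem) (p.smul_mem (y k / x k) hxp)
  simpa using this

private lemma key (hn : 3 ≤ n)
    (σ : inclGraph F (Fin n → F) ≃g inclGraph F (Fin n → F))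
    (hfix : ∀ (w : InVert F (Fin n → F)) (i : Fin n),
      w.1 = Submodule.span F {Pi.single i (1 : F)} → (σ w).1 = w.1)
    (w : InVert F (Fin n → F)) (a b : Fin n → F) (ha : a ≠ 0)
    (hwa : w.1 = Submodule.span F {a}) (hwb : (σ w).1 = Submodule.span F {b})
    (k : Fin n) (hak : a k = 0) : b k = 0 := by
  classical
  set e : Fin n → Fin n → F := fun i => Pi.single i (1 : F) with he
  have hcard : Fintype.card (Fin n) = n := Fintype.card_fin n
  have he_ne : ∀ i, e i ≠ 0 := by
    intro i h
    have := congrFun h i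
    simp [he] at this
  have he_not_mem : ∀ i j : Fin n, i ≠ j → e i ∉ Submodule.span F {e j} := by
    intro i j hij hmem
    obtain ⟨c, hc⟩ := Submodule.mem_span_singleton.mp hmem
    have := congrFun hc i
    simp [he, Pi.single_eq_of_ne hij, Pi.single_eq_same] at this
  set K : Submodule F (Fin n → F) :=
    LinearMap.ker (LinearMap.proj k : (Fin n → F) →ₗ[F] F) with hK
  have memK : ∀ x : Fin n → F, x ∈ K ↔ x k = 0 := by
    intro x; simp [hK, LinearMap.mem_ker]
  -- two distinct indices different from k
  obtain ⟨j₁, hj₁, j₂, hj₂, hj12⟩ :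
      ∃ j₁ ∈ ({k} : Finset (Fin n))ᶜ, ∃ j₂ ∈ ({k} : Finset (Fin n))ᶜ, j₁ ≠ j₂ := by
    apply Finset.one_lt_card.mp
    rw [Finset.card_compl, Finset.card_singleton, hcard]
    omega
  simp only [Finset.mem_compl, Finset.mem_singleton] at hj₁ hj₂
  have hKbot : K ≠ ⊥ := by
    intro h
    have : e j₁ ∈ K := (memK _).mpr (by simp [he, Pi.single_eq_of_ne (Ne.symm hj₁)])
    rw [h, Submodule.mem_bot] at this
    exact he_ne j₁ this
  have hKtop : K ≠ ⊤ := by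
    intro h
    have : e k ∈ K := by rw [h]; trivial
    rw [memK] at this
    simp [he] at this
  set Hv : InVert F (Fin n → F) := ⟨K, hKbot, hKtop⟩ with hHv
  -- σ fixes Hv (as a subspace)
  have hσK : (σ Hv).1 = K := by
    have hei : ∀ i : Fin n, i ≠ k → e i ∈ (σ Hv).1 := by
      intro i hi
      -- a third index
      obtain ⟨j, hj⟩ : ∃ j, j ∉ ({i, k} : Finset (Fin n)) := by
        have hlt : (({i, k} : Finset (Fin n)))ᶜ.Nonempty := by
          rw [← Finset.card_pos, Finset.card_compl, hcard]
          have := Finset.card_insert_le i ({k} : Finset (Fin n))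
          simp only [Finset.card_singleton] at this
          omega
        obtain ⟨j, hj⟩ := hlt
        exact ⟨j, Finset.mem_compl.mp hj⟩
      simp only [Finset.mem_insert, Finset.mem_singleton, not_or] at hj
      have hsbot : Submodule.span F {e i} ≠ ⊥ := by
        simp [Submodule.span_singleton_eq_bot, he_ne i]
      have hstop : Submodule.span F {e i} ≠ ⊤ := by
        intro h
        exact he_not_mem j i (fun hh => hj.1 hh) (h ▸ Submodule.mem_top)
      set wi : InVert F (Fin n → F) := ⟨Submodule.span F {e i}, hsbot, hstop⟩ with hwi
      have hfixi : σ wi = wi := Subtype.ext (hfix wi i rfl)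
      have hadj : (inclGraph F (Fin n → F)).Adj wi Hv := by
        left
        refine lt_of_le_of_ne ?_ ?_
        · show Submodule.span F {e i} ≤ K
          rw [Submodule.span_le, Set.singleton_subset_iff]
          exact (memK _).mpr (by simp [he, Pi.single_eq_of_ne (Ne.symm hi)])
        · show Submodule.span F {e i} ≠ K
          intro hEq
          exact he_not_mem j i (fun hh => hj.1 hh)
            (hEq ▸ ((memK _).mpr (by simp [he, Pi.single_eq_of_ne (Ne.symm hj.2)])))
      have hadj' := σ.map_adj_iff.mpr hadj
      rw [hfixi] at hadj'
      rcases hadj' with h | h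
      · exact h.le (Submodule.mem_span_singleton_self _)
      · exfalso
        have := eq_span_of_le_span_singleton h.le (σ Hv).2.1
        exact h.ne this
    have hle : K ≤ (σ Hv).1 := by
      intro x hx
      have hxk : x k = 0 := (memK _).mp hx
      have hrepr : x = ∑ i, (x i) • e i := by
        refine Eq.trans (Finset.univ_sum_single x).symm
          (Finset.sum_congr rfl fun i _ => ?_)
        simp [he, ← Pi.single_smul]
      rw [hrepr]
      apply Submodule.sum_mem
      intro i _
      by_cases hik : i = k
      · subst hik; rw [hxk, zero_smul]; exact Submodule.zero_mem _
      · exact Submodule.smul_mem _ _ (hei i hik)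
    exact ker_proj_coatom k _ hle (σ Hv).2.2
  -- [a] is properly contained in K
  have haK : a ∈ K := (memK _).mpr hak
  have hlt : w.1 < K := by
    rw [hwa]
    refine lt_of_le_of_ne ?_ ?_
    · rw [Submodule.span_le, Set.singleton_subset_iff]; exact haK
    · intro hEq
      have h1 : e j₁ ∈ Submodule.span F {a} :=
        hEq ▸ ((memK _).mpr (by simp [he, Pi.single_eq_of_ne (Ne.symm hj₁)]))
      have h2 : e j₂ ∈ Submodule.span F {a} :=
        hEq ▸ ((memK _).mpr (by simp [he, Pi.single_eq_of_ne (Ne.symm hj₂)]))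
      obtain ⟨c₁, hc₁⟩ := Submodule.mem_span_singleton.mp h1
      obtain ⟨c₂, hc₂⟩ := Submodule.mem_span_singleton.mp h2
      have hc₁0 : c₁ ≠ 0 := by rintro rfl; simp at hc₁; exact he_ne j₁ hc₁.symm
      have : e j₂ = (c₂ * c₁⁻¹) • e j₁ := by
        rw [← hc₂, ← hc₁, smul_smul, mul_assoc, inv_mul_cancel₀ hc₁0, mul_one]
      have := congrFun this j₂
      simp [he, Pi.single_eq_same, Pi.single_eq_of_ne hj12.symm] at this
  have hadj : (inclGraph F (Fin n → F)).Adj w Hv := Or.inl hlt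
  have hadj' := σ.map_adj_iff.mpr hadj
  rcases hadj' with h | h
  · have : b ∈ K := by
      rw [hσK] at h
      exact h.le (hwb ▸ Submodule.mem_span_singleton_self b)
    exact (memK _).mp this
  · exfalso
    rw [hσK] at h
    have := ker_proj_coatom k _ h.le (σ w).2.2
    exact h.ne ((hK ▸ this).symm)

end Aux

/-- If a graph automorphism `σ` of `In(F_q^n)` fixes `[eᵢ]` for every `i`, and
`σ([α]) = [β]` for a nonzero vector `α = ∑ aᵢeᵢ` with `β = ∑ bᵢeᵢ`, then
`b_k = 0 ↔ a_k = 0` for every `k`. -/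
theorem inclGraph_aut_support_preserving
    (F : Type*) [Field F] [Fintype F] (n : ℕ) (hn : 3 ≤ n)
    (σ : inclGraph F (Fin n → F) ≃g inclGraph F (Fin n → F))
    (hfix : ∀ (w : InVert F (Fin n → F)) (i : Fin n),
      w.1 = Submodule.span F {Pi.single i (1 : F)} → (σ w).1 = w.1)
    (w : InVert F (Fin n → F)) (a b : Fin n → F) (ha : a ≠ 0)
    (hwa : w.1 = Submodule.span F {a}) (hwb : (σ w).1 = Submodule.span F {b}) :
    ∀ k : Fin n, b k = 0 ↔ a k = 0 := by
  have hb : b ≠ 0 := by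
    intro h
    apply (σ w).2.1
    rw [hwb, h, Submodule.span_zero_singleton]
  have hfix' : ∀ (w' : InVert F (Fin n → F)) (i : Fin n),
      w'.1 = Submodule.span F {Pi.single i (1 : F)} → (σ.symm w').1 = w'.1 := by
    intro w' i h'
    have : σ w' = w' := Subtype.ext (hfix w' i h')
    rw [← this, σ.symm_apply_apply, this]
  have hwb' : (σ.symm (σ w)).1 = Submodule.span F {a} := by
    rw [σ.symm_apply_apply]; exact hwa
  intro k
  constructor
  · intro hbk
    exact key hn σ.symm hfix' (σ w) b a hb hwb hwb' k hbk
  · intro hak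
    exact key hn σ hfix w a b ha hwa hwb k hak
end

section
/- Let F_q be a finite field and let V be an n-dimensional vector space over F_q with n ≥ 3. If σ is a graph automorphism of In(V) that fixes every 1-dimensional subspace of V, then σ fixes every vertex of In(V), i.e., σ is the identity map on the vertex set. -/
/-- A graph automorphism of `In(V)`, `dim V ≥ 3`, fixing every 1-dimensional subspace
is the identity on the vertex set. -/
theorem inclGraph_aut_fixing_lines_is_id
    (F V : Type*) [Field F] [Fintype F] [AddCommGroup V] [Module F V] [FiniteDimensional F V]
    (hn : 3 ≤ Module.finrank F V)
    (σ : inclGraph F V ≃g inclGraph F V)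
    (h : ∀ w : InVert F V, Module.finrank F w.1 = 1 → σ w = w) :
    ∀ w : InVert F V, σ w = w := by
  intro w
  by_cases h1 : Module.finrank F w.1 = 1
  · exact h w h1
  by_cases h2 : Module.finrank F (σ w).1 = 1
  · have hfix : σ (σ w) = σ w := h (σ w) h2
    exact σ.toEquiv.injective hfix
  have hw2 : 2 ≤ Module.finrank F w.1 := by
    have h0 : Module.finrank F w.1 ≠ 0 :=
      fun hz => w.2.1 (Submodule.finrank_eq_zero.mp hz)
    omega
  have hσ2 : 2 ≤ Module.finrank F (σ w).1 := by
    have h0 : Module.finrank F (σ w).1 ≠ 0 :=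
      fun hz => (σ w).2.1 (Submodule.finrank_eq_zero.mp hz)
    omega
  have key : ∀ x : V, x ≠ 0 →
      (Submodule.span F {x} < w.1 ↔ Submodule.span F {x} < (σ w).1) := by
    intro x hx
    have hfin : Module.finrank F (Submodule.span F {x}) = 1 := finrank_span_singleton hx
    have hLbot : Submodule.span F {x} ≠ ⊥ := by
      intro hT; rw [hT] at hfin; simp at hfin
    have hLtop : Submodule.span F {x} ≠ ⊤ := by
      intro hT; rw [hT, finrank_top] at hfin; omega
    let L : InVert F V := ⟨Submodule.span F {x}, hLbot, hLtop⟩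
    have hfixL : σ L = L := h L hfin
    have hiff := σ.map_rel_iff (a := L) (b := w)
    rw [hfixL] at hiff
    -- hiff : (inclGraph F V).Adj L (σ w) ↔ (inclGraph F V).Adj L w
    have adjw : (inclGraph F V).Adj L w ↔ Submodule.span F {x} < w.1 := by
      constructor
      · rintro (hlt | hlt)
        · exact hlt
        · exfalso
          have hfinL : Module.finrank F L.1 = 1 := hfin
          have := Submodule.finrank_lt_finrank_of_lt hlt
          omega
      · exact Or.inl
    have adjσ : (inclGraph F V).Adj L (σ w) ↔ Submodule.span F {x} < (σ w).1 := by
      constructor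
      · rintro (hlt | hlt)
        · exact hlt
        · exfalso
          have hfinL : Module.finrank F L.1 = 1 := hfin
          have := Submodule.finrank_lt_finrank_of_lt hlt
          omega
      · exact Or.inl
    rw [← adjw, ← adjσ]; exact hiff.symm
  have hle : ∀ (u : Submodule F V), 2 ≤ Module.finrank F u →
      (∀ x : V, x ≠ 0 → Submodule.span F {x} < u → x ∈ (u : Submodule F V)) := by
    intro u _ x hx hlt
    exact hlt.le (Submodule.mem_span_singleton_self x)
  refine Subtype.ext (le_antisymm
      (fun x hxσ => by
        by_cases hx : x = 0
        · simp [hx]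
        have hsle : Submodule.span F {x} ≤ (σ w).1 :=
          (Submodule.span_singleton_le_iff_mem x (σ w).1).2 hxσ
        have hslt : Submodule.span F {x} < (σ w).1 := by
          rcases hsle.lt_or_eq with hlt | heq
          · exact hlt
          · exfalso
            rw [← heq] at hσ2
            rw [finrank_span_singleton hx] at hσ2
            omega
        exact ((key x hx).2 hslt).le (Submodule.mem_span_singleton_self x))
      (fun x hxw => by
        by_cases hx : x = 0
        · simp [hx]
        have hsle : Submodule.span F {x} ≤ w.1 :=
          (Submodule.span_singleton_le_iff_mem x w.1).2 hxw
        have hslt : Submodule.span F {x} < w.1 := by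
          rcases hsle.lt_or_eq with hlt | heq
          · exact hlt
          · exfalso
            rw [← heq] at hw2
            rw [finrank_span_singleton hx] at hw2
            omega
        exact ((key x hx).1 hslt).le (Submodule.mem_span_singleton_self x)))
end
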